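/- arXiv:1510.01617 — 5 statements merged into one kernel-verified Lean document; each statement's English description precedes it below -/
import Mathlib

section
/- In the Baumslag-Solitar group H = ⟨x, y | y⁻¹xy = x²⟩, the centralizer of x is exactly the set of elements of the form y^n x^j y^{-n} for n ≥ 0 and j ∈ ℤ. -/
/-- Relator for the Baumslag-Solitar group BS(1,2) = ⟨x, y | y⁻¹xy = x²⟩,
with `false ↦ x`, `true ↦ y`. -/
def bsRels : Set (FreeGroup Bool) :=
  {(FreeGroup.of true)⁻¹ * FreeGroup.of false * FreeGroup.of true *
    (FreeGroup.of false * FreeGroup.of false)⁻¹}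

/-- The Baumslag-Solitar group BS(1,2). -/
abbrev BS := PresentedGroup bsRels

/-- The generator x of BS(1,2). -/
def bsx : BS := PresentedGroup.of false

/-- The generator y of BS(1,2). -/
def bsy : BS := PresentedGroup.of true

lemma bs_rel : bsy⁻¹ * bsx * bsy = bsx * bsx := by
  have h : (PresentedGroup.mk bsRels) ((FreeGroup.of true)⁻¹ * FreeGroup.of false *
      FreeGroup.of true * (FreeGroup.of false * FreeGroup.of false)⁻¹) = 1 := by
    apply (QuotientGroup.eq_one_iff _).mpr
    exact Subgroup.subset_normalClosure (by simp [bsRels])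
  simp only [map_mul, map_inv] at h
  have := mul_inv_eq_one.mp h
  simpa [bsx, bsy, PresentedGroup.of] using this

lemma bs_conj_zpow (m : ℤ) : bsy⁻¹ * bsx ^ m * bsy = bsx ^ (2 * m) := by
  have h : bsy⁻¹ * bsx ^ m * bsy = (bsy⁻¹ * bsx * (bsy⁻¹)⁻¹) ^ m := by
    rw [conj_zpow]; simp
  rw [h]
  have h2 : bsy⁻¹ * bsx * (bsy⁻¹)⁻¹ = bsx ^ (2:ℤ) := by
    rw [inv_inv, zpow_two]; exact bs_rel
  rw [h2, ← zpow_mul]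

/-- y^{-n} x^m y^n = x^{m * 2^n} -/
lemma bs_L1 (n : ℕ) (m : ℤ) : (bsy ^ n)⁻¹ * bsx ^ m * bsy ^ n = bsx ^ (m * 2 ^ n) := by
  induction n generalizing m with
  | zero => simp
  | succ k ih =>
    have : (bsy ^ (k+1))⁻¹ * bsx ^ m * bsy ^ (k+1)
        = (bsy ^ k)⁻¹ * (bsy⁻¹ * bsx ^ m * bsy) * bsy ^ k := by
      rw [pow_succ]; group
    rw [this, bs_conj_zpow, ih]
    ring_nf

/-- x^m * y^n = y^n * x^{m * 2^n} -/
lemma bs_L2 (n : ℕ) (m : ℤ) : bsx ^ m * bsy ^ n = bsy ^ n * bsx ^ (m * 2 ^ n) := by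
  rw [← bs_L1 n m]; group

/-- y^{-n} * x^m = x^{m * 2^n} * y^{-n} -/
lemma bs_L3 (n : ℕ) (m : ℤ) : (bsy ^ n)⁻¹ * bsx ^ m = bsx ^ (m * 2 ^ n) * (bsy ^ n)⁻¹ := by
  rw [← bs_L1 n m]; group

lemma bs_normal_form (g : BS) :
    ∃ (a b : ℕ) (m : ℤ), g = bsy ^ a * bsx ^ m * (bsy ^ b)⁻¹ := by
  have hg : g ∈ Subgroup.closure (Set.range (PresentedGroup.of : Bool → BS)) := by
    rw [PresentedGroup.closure_range_of]; trivial
  induction hg using Subgroup.closure_induction with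
  | mem z hz =>
    obtain ⟨t, rfl⟩ := hz
    cases t
    · exact ⟨0, 0, 1, by simp [bsx]⟩
    · exact ⟨1, 0, 0, by simp [bsy]⟩
  | one => exact ⟨0, 0, 0, by simp⟩
  | mul u v _ _ hu hv =>
    obtain ⟨a, b, m, rfl⟩ := hu
    obtain ⟨c, d, k, rfl⟩ := hv
    rcases le_total b c with h | h
    · refine ⟨a + (c - b), d, m * 2 ^ (c - b) + k, ?_⟩
      have hc : bsy ^ c = bsy ^ (c - b) * bsy ^ b := by
        rw [← pow_add]; congr 1; omega
      rw [hc, pow_add, zpow_add]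
      calc bsy ^ a * bsx ^ m * (bsy ^ b)⁻¹ * (bsy ^ (c - b) * bsy ^ b * bsx ^ k * (bsy ^ d)⁻¹)
          = bsy ^ a * (bsx ^ m * bsy ^ (c-b)) * (bsy ^ b)⁻¹ * bsy ^ b * bsx ^ k * (bsy ^ d)⁻¹ := by
            group
        _ = bsy ^ a * (bsy ^ (c-b) * bsx ^ (m * 2 ^ (c-b))) * bsx ^ k * (bsy ^ d)⁻¹ := by
            rw [bs_L2]; group
        _ = bsy ^ a * bsy ^ (c - b) * (bsx ^ (m * 2 ^ (c - b)) * bsx ^ k) * (bsy ^ d)⁻¹ := by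
            group
        _ = _ := by rw [← zpow_add]
    · refine ⟨a, d + (b - c), m + k * 2 ^ (b - c), ?_⟩
      have hb : bsy ^ b = bsy ^ (b - c) * bsy ^ c := by
        rw [← pow_add]; congr 1; omega
      rw [hb, pow_add, zpow_add]
      calc bsy ^ a * bsx ^ m * (bsy ^ (b-c) * bsy ^ c)⁻¹ * (bsy ^ c * bsx ^ k * (bsy ^ d)⁻¹)
          = bsy ^ a * bsx ^ m * ((bsy ^ (b-c))⁻¹ * bsx ^ k) * (bsy ^ d)⁻¹ := by group
        _ = bsy ^ a * bsx ^ m * (bsx ^ (k * 2 ^ (b-c)) * (bsy ^ (b-c))⁻¹) * (bsy ^ d)⁻¹ := by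
            rw [bs_L3]
        _ = bsy ^ a * (bsx ^ m * bsx ^ (k * 2 ^ (b-c))) * ((bsy ^ d) * bsy ^ (b-c))⁻¹ := by
            group
        _ = _ := by rw [← zpow_add]
  | inv u _ hu =>
    obtain ⟨a, b, m, rfl⟩ := hu
    exact ⟨b, a, -m, by group⟩

/-- The affine representation generators: x ↦ (t ↦ t + 1), y ↦ (t ↦ t / 2). -/
def bsF : Bool → Equiv.Perm ℚ
  | false => Equiv.addRight (1 : ℚ)
  | true => Equiv.mulRight₀ (2 : ℚ)⁻¹ (by norm_num)

lemma bsF_rels : ∀ r ∈ bsRels, FreeGroup.lift bsF r = 1 := by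
  intro r hr
  simp only [bsRels, Set.mem_singleton_iff] at hr
  subst hr
  simp only [map_mul, map_inv, FreeGroup.lift_apply_of]
  ext t
  simp [bsF, Equiv.Perm.mul_apply, Equiv.Perm.inv_def]
  ring

/-- The representation BS(1,2) →* Perm ℚ. -/
def bsPhi : BS →* Equiv.Perm ℚ := PresentedGroup.toGroup bsF_rels

lemma bsPhi_x : bsPhi bsx = Equiv.addRight (1 : ℚ) := PresentedGroup.toGroup.of bsF_rels
lemma bsPhi_y : bsPhi bsy = Equiv.mulRight₀ (2 : ℚ)⁻¹ (by norm_num) :=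
  PresentedGroup.toGroup.of bsF_rels

lemma bsPhi_x_zpow (m : ℤ) : ∀ t : ℚ, (bsPhi (bsx ^ m)) t = t + m := by
  rw [map_zpow, bsPhi_x]
  induction m using Int.induction_on with
  | zero => simp
  | succ k ih =>
    intro t
    rw [zpow_add_one, Equiv.Perm.mul_apply, ih]
    push_cast; simp; ring
  | pred k ih =>
    intro t
    rw [zpow_sub_one, Equiv.Perm.mul_apply, ih]
    push_cast
    simp [Equiv.Perm.inv_def]
    ring

lemma bsPhi_y_pow (n : ℕ) : ∀ t : ℚ, (bsPhi (bsy ^ n)) t = t / 2 ^ n := by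
  rw [map_pow, bsPhi_y]
  induction n with
  | zero => simp
  | succ k ih =>
    intro t
    rw [pow_succ, Equiv.Perm.mul_apply, ih]
    simp [Equiv.mulRight₀]
    ring

lemma bsPhi_y_pow_inv (n : ℕ) (t : ℚ) : (bsPhi ((bsy ^ n)⁻¹)) t = t * 2 ^ n := by
  have := bsPhi_y_pow n (t * 2 ^ n)

  rw [map_inv]
  rw [Equiv.Perm.inv_def]
  apply (Equiv.symm_apply_eq _).mpr
  rw [this]
  field_simp

lemma bsPhi_x_apply (t : ℚ) : (bsPhi bsx) t = t + 1 := by rw [bsPhi_x]; simp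

/-- In BS(1,2), the centralizer of x is exactly
{ y^n x^j y^{-n} : n ∈ ℕ, j ∈ ℤ }. -/
theorem bs_centralizer_of_x (g : BS) :
    g ∈ Subgroup.centralizer {bsx} ↔
      ∃ (n : ℕ) (j : ℤ), g = bsy ^ n * bsx ^ j * (bsy ^ n)⁻¹ := by
  constructor
  · intro hg
    obtain ⟨a, b, m, rfl⟩ := bs_normal_form g
    have hcomm : bsx * (bsy ^ a * bsx ^ m * (bsy ^ b)⁻¹)
        = (bsy ^ a * bsx ^ m * (bsy ^ b)⁻¹) * bsx :=
      (Subgroup.mem_centralizer_iff.mp hg) bsx (Set.mem_singleton _)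
    have heval := congrArg (fun z => (bsPhi z) 0) hcomm
    simp only [map_mul, Equiv.Perm.mul_apply, bsPhi_x_apply, bsPhi_y_pow_inv,
      bsPhi_x_zpow, bsPhi_y_pow] at heval
    have hab : (2 : ℚ) ^ b = 2 ^ a := by
      field_simp at heval
      linarith
    have hba : b = a := by
      have : (2 : ℕ) ^ b = 2 ^ a := by exact_mod_cast hab
      exact Nat.pow_right_injective (le_refl 2) this
    subst hba
    exact ⟨b, m, rfl⟩
  · rintro ⟨n, j, rfl⟩
    rw [Subgroup.mem_centralizer_iff]
    rintro h rfl
    have hx : bsx = bsy ^ n * bsx ^ ((2 : ℤ) ^ n) * (bsy ^ n)⁻¹ := by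
      have := bs_L1 n 1
      rw [one_mul] at this
      rw [← this]
      group
    calc bsx * (bsy ^ n * bsx ^ j * (bsy ^ n)⁻¹)
        = (bsy ^ n * bsx ^ ((2 : ℤ) ^ n) * (bsy ^ n)⁻¹) * (bsy ^ n * bsx ^ j * (bsy ^ n)⁻¹) := by
          rw [← hx]
      _ = bsy ^ n * (bsx ^ ((2 : ℤ) ^ n) * bsx ^ j) * (bsy ^ n)⁻¹ := by group
      _ = bsy ^ n * (bsx ^ j * bsx ^ ((2 : ℤ) ^ n)) * (bsy ^ n)⁻¹ := by
          rw [← zpow_add, ← zpow_add, add_comm]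
      _ = (bsy ^ n * bsx ^ j * (bsy ^ n)⁻¹) * (bsy ^ n * bsx ^ ((2 : ℤ) ^ n) * (bsy ^ n)⁻¹) := by
          group
      _ = (bsy ^ n * bsx ^ j * (bsy ^ n)⁻¹) * bsx := by rw [← hx]
end

section
/- In the Baumslag-Solitar group H = ⟨x, y | y⁻¹xy = x²⟩, the centralizer of x is isomorphic to the additive group of dyadic rationals, via the map sending y^n x^j y^{-n} to j/2^n. -/
namespace BSAux

/-- The group `ℚ ⋊ ℤ` with multiplication `(q,n)(q',n') = (q + 2^n q', n+n')`. -/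
@[ext] structure G where
  q : ℚ
  n : ℤ

instance : Mul G := ⟨fun a b => ⟨a.q + 2 ^ a.n * b.q, a.n + b.n⟩⟩
instance : One G := ⟨⟨0, 0⟩⟩
instance : Inv G := ⟨fun a => ⟨-(2 ^ (-a.n) * a.q), -a.n⟩⟩

@[simp] lemma mul_q (a b : G) : (a * b).q = a.q + 2 ^ a.n * b.q := rfl
@[simp] lemma mul_n (a b : G) : (a * b).n = a.n + b.n := rfl
@[simp] lemma one_q : (1 : G).q = 0 := rfl
@[simp] lemma one_n : (1 : G).n = 0 := rfl
@[simp] lemma inv_q (a : G) : (a⁻¹).q = -(2 ^ (-a.n) * a.q) := rfl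
@[simp] lemma inv_n (a : G) : (a⁻¹).n = -a.n := rfl

lemma two_ne : (2 : ℚ) ≠ 0 := by norm_num

instance : Group G where
  mul_assoc a b c := by
    ext
    · simp [zpow_add₀ two_ne]; ring
    · simp [add_assoc]
  one_mul a := by ext <;> simp
  mul_one a := by ext <;> simp
  inv_mul_cancel a := by
    ext
    · simp
    · simp

def f : Bool → G := fun b => if b then ⟨0, -1⟩ else ⟨1, 0⟩

lemma hrel : ∀ r ∈ bsRels, FreeGroup.lift f r = 1 := by
  intro r hr
  have : r = (FreeGroup.of true)⁻¹ * FreeGroup.of false * FreeGroup.of true *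
      (FreeGroup.of false * FreeGroup.of false)⁻¹ := hr
  subst this
  simp only [map_mul, map_inv, FreeGroup.lift_apply_of, f]
  ext <;> norm_num

def φ : BS →* G := PresentedGroup.toGroup hrel

lemma φx : φ bsx = ⟨1, 0⟩ := PresentedGroup.toGroup.of hrel
lemma φy : φ bsy = ⟨0, -1⟩ := PresentedGroup.toGroup.of hrel

lemma gy_pow (n : ℕ) : (⟨0, -1⟩ : G) ^ n = ⟨0, -(n : ℤ)⟩ := by
  induction n with
  | zero => ext <;> simp
  | succ k ih => rw [pow_succ, ih]; ext <;> simp; push_cast; ring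

lemma gx_zpow (j : ℤ) : (⟨1, 0⟩ : G) ^ j = ⟨(j : ℚ), 0⟩ := by
  induction j using Int.induction_on with
  | zero => ext <;> simp
  | succ k ih => rw [zpow_add_one, ih]; ext <;> push_cast <;> simp
  | pred k ih => rw [zpow_sub_one, ih]; ext <;> push_cast <;> simp <;> ring

lemma φ_yn (n : ℕ) : φ (bsy ^ n) = ⟨0, -(n : ℤ)⟩ := by
  rw [map_pow, φy, gy_pow]

lemma φ_xj (j : ℤ) : φ (bsx ^ j) = ⟨(j : ℚ), 0⟩ := by
  rw [map_zpow, φx, gx_zpow]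

lemma φ_nf (n m : ℕ) (j : ℤ) :
    φ (bsy ^ n * bsx ^ j * (bsy ^ m)⁻¹) = ⟨(j : ℚ) / 2 ^ n, (m : ℤ) - n⟩ := by
  rw [map_mul, map_mul, map_inv, φ_yn, φ_xj, φ_yn]
  ext
  · simp [zpow_neg, zpow_natCast]
    rw [inv_mul_eq_div]
  · simp; ring

/-- The defining relation in BS. -/
lemma relBS : bsy⁻¹ * bsx * bsy = bsx * bsx := by
  have hmem : ((FreeGroup.of true)⁻¹ * FreeGroup.of false * FreeGroup.of true *
      (FreeGroup.of false * FreeGroup.of false)⁻¹) ∈ Subgroup.normalClosure bsRels :=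
    Subgroup.subset_normalClosure rfl
  have h1 : PresentedGroup.mk bsRels ((FreeGroup.of true)⁻¹ * FreeGroup.of false *
      FreeGroup.of true * (FreeGroup.of false * FreeGroup.of false)⁻¹) = 1 :=
    (QuotientGroup.eq_one_iff _).mpr hmem
  have h2 : bsy⁻¹ * bsx * bsy * (bsx * bsx)⁻¹ = 1 := by
    simpa [bsx, bsy, PresentedGroup.of, map_mul, map_inv] using h1
  have := mul_inv_eq_one.mp h2
  exact this

lemma conj_sq : bsy * (bsx * bsx) * bsy⁻¹ = bsx := by
  rw [← relBS]; group

lemma conj_pow (j : ℤ) : bsy * bsx ^ (2 * j) * bsy⁻¹ = bsx ^ j := by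
  have : bsx ^ (2 * j) = (bsx * bsx) ^ j := by
    rw [zpow_mul, zpow_two]
  rw [this]
  calc bsy * (bsx * bsx) ^ j * bsy⁻¹ = (bsy * (bsx * bsx) * bsy⁻¹) ^ j := by
        rw [← conj_zpow]
    _ = bsx ^ j := by rw [conj_sq]

lemma bump (n m : ℕ) (j : ℤ) (d : ℕ) :
    bsy ^ n * bsx ^ j * (bsy ^ m)⁻¹ =
      bsy ^ (n + d) * bsx ^ (2 ^ d * j) * (bsy ^ (m + d))⁻¹ := by
  induction d with
  | zero => simp
  | succ k ih =>
    rw [ih]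
    have hx : bsx ^ (2 ^ (k + 1) * j) = bsx ^ (2 * (2 ^ k * j)) := by ring_nf
    rw [hx]
    have hc := conj_pow (2 ^ k * j)
    calc bsy ^ (n + k) * bsx ^ (2 ^ k * j) * (bsy ^ (m + k))⁻¹
        = bsy ^ (n + k) * (bsy * bsx ^ (2 * (2 ^ k * j)) * bsy⁻¹) * (bsy ^ (m + k))⁻¹ := by
          rw [hc]
      _ = bsy ^ (n + (k + 1)) * bsx ^ (2 * (2 ^ k * j)) * (bsy ^ (m + (k + 1)))⁻¹ := by
          rw [show n + (k + 1) = (n + k) + 1 from rfl, show m + (k + 1) = (m + k) + 1 from rfl,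
            pow_succ, pow_succ]
          group

/-- Normal form: every element of BS has the form `y^n x^j y^{-m}`. -/
lemma nf (g : BS) : ∃ (n m : ℕ) (j : ℤ), g = bsy ^ n * bsx ^ j * (bsy ^ m)⁻¹ := by
  have hg : g ∈ Subgroup.closure (Set.range (PresentedGroup.of : Bool → BS)) := by
    rw [PresentedGroup.closure_range_of]; trivial
  induction hg using Subgroup.closure_induction with
  | mem a ha =>
    obtain ⟨b, rfl⟩ := ha
    cases b
    · exact ⟨0, 0, 1, by simp [bsx]⟩
    · exact ⟨1, 0, 0, by simp [bsy]⟩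
  | one => exact ⟨0, 0, 0, by simp⟩
  | mul a b _ _ iha ihb =>
    obtain ⟨n, m, j, rfl⟩ := iha
    obtain ⟨p, q, k, rfl⟩ := ihb
    refine ⟨n + p, q + m, 2 ^ p * j + 2 ^ m * k, ?_⟩
    rw [bump n m j p, bump p q k m]
    have hmp : m + p = p + m := by ring
    rw [hmp, zpow_add]
    group
  | inv a _ iha =>
    obtain ⟨n, m, j, rfl⟩ := iha
    exact ⟨m, n, -j, by group⟩

lemma cent_n {g : BS} (hg : g ∈ Subgroup.centralizer {bsx}) : (φ g).n = 0 := by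
  have hc : bsx * g = g * bsx := Subgroup.mem_centralizer_iff.mp hg bsx rfl
  have := congrArg φ hc
  rw [map_mul, map_mul, φx] at this
  have hq := congrArg G.q this
  simp at hq
  have h2 : (2 : ℚ) ^ (φ g).n = 1 := by
    have := hq
    nlinarith [this]
  exact (zpow_eq_one_iff_right₀ (by norm_num) (by norm_num)).mp h2

lemma x_eq (n : ℕ) : bsx = bsy ^ n * bsx ^ (2 ^ n : ℤ) * (bsy ^ n)⁻¹ := by
  have := bump 0 0 1 n
  simpa using this

lemma mem_cent (n : ℕ) (j : ℤ) :
    bsy ^ n * bsx ^ j * (bsy ^ n)⁻¹ ∈ Subgroup.centralizer {bsx} := by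
  rw [Subgroup.mem_centralizer_iff]
  rintro h rfl
  calc bsx * (bsy ^ n * bsx ^ j * (bsy ^ n)⁻¹)
      = (bsy ^ n * bsx ^ (2 ^ n : ℤ) * (bsy ^ n)⁻¹) * (bsy ^ n * bsx ^ j * (bsy ^ n)⁻¹) := by
        rw [← x_eq]
    _ = bsy ^ n * (bsx ^ (2 ^ n : ℤ) * bsx ^ j) * (bsy ^ n)⁻¹ := by group
    _ = bsy ^ n * (bsx ^ j * bsx ^ (2 ^ n : ℤ)) * (bsy ^ n)⁻¹ := by
        rw [← zpow_add, ← zpow_add, add_comm]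
    _ = (bsy ^ n * bsx ^ j * (bsy ^ n)⁻¹) * (bsy ^ n * bsx ^ (2 ^ n : ℤ) * (bsy ^ n)⁻¹) := by
        group
    _ = (bsy ^ n * bsx ^ j * (bsy ^ n)⁻¹) * bsx := by rw [← x_eq]

end BSAux

open BSAux in
/-- The centralizer of x in BS(1,2) is isomorphic to the additive group of
dyadic rationals, via y^n x^j y^{-n} ↦ j/2^n. -/
theorem bs_centralizer_iso_dyadic
    (D : AddSubgroup ℚ)
    (hD : ∀ q : ℚ, q ∈ D ↔ ∃ (j : ℤ) (n : ℕ), q = (j : ℚ) / 2 ^ n) :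
    ∃ e : Subgroup.centralizer {bsx} ≃* Multiplicative D,
      ∀ (n : ℕ) (j : ℤ) (h : bsy ^ n * bsx ^ j * (bsy ^ n)⁻¹ ∈ Subgroup.centralizer {bsx}),
        ((Multiplicative.toAdd (e ⟨bsy ^ n * bsx ^ j * (bsy ^ n)⁻¹, h⟩) : D) : ℚ)
          = (j : ℚ) / 2 ^ n := by
  have memD : ∀ g : BS, (φ g).q ∈ D := by
    intro g
    obtain ⟨n, m, j, rfl⟩ := nf g
    rw [φ_nf]
    exact (hD _).mpr ⟨j, n, rfl⟩
  let Φ : Subgroup.centralizer {bsx} →* Multiplicative D :=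
    MonoidHom.mk' (fun g => Multiplicative.ofAdd (⟨(φ (g : BS)).q, memD _⟩ : D))
      (by
        intro a b
        have hn : (φ (a : BS)).n = 0 := cent_n a.2
        refine congrArg Multiplicative.ofAdd (Subtype.ext ?_)
        push_cast
        show (φ ((a : BS) * (b : BS))).q = (φ (a : BS)).q + (φ (b : BS)).q
        rw [map_mul, mul_q, hn]
        simp)
  have hΦ : ∀ (g : Subgroup.centralizer {bsx}),
      ((Multiplicative.toAdd (Φ g) : D) : ℚ) = (φ (g : BS)).q := fun g => rfl
  have hinj : Function.Injective Φ := by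
    rw [injective_iff_map_eq_one]
    intro g hg1
    have hq : (φ (g : BS)).q = 0 := by
      have := congrArg (fun z => ((Multiplicative.toAdd z : D) : ℚ)) hg1
      simpa [hΦ g] using this
    have hn : (φ (g : BS)).n = 0 := cent_n g.2
    obtain ⟨n, m, j, hval⟩ := nf (g : BS)
    rw [hval, φ_nf] at hq hn
    simp at hq hn
    have hj : j = 0 := hq
    have hmn : m = n := by omega
    have : (g : BS) = 1 := by
      rw [hval, hj, hmn]
      simp
    exact Subtype.ext this
  have hsurj : Function.Surjective Φ := by
    intro d
    obtain ⟨j, n, hq⟩ := (hD ((Multiplicative.toAdd d : D) : ℚ)).mp (Multiplicative.toAdd d : D).2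
    refine ⟨⟨bsy ^ n * bsx ^ j * (bsy ^ n)⁻¹, mem_cent n j⟩, ?_⟩
    apply Multiplicative.toAdd.injective
    apply Subtype.ext
    show (φ (bsy ^ n * bsx ^ j * (bsy ^ n)⁻¹)).q = ((Multiplicative.toAdd d : D) : ℚ)
    rw [φ_nf, hq]
  refine ⟨MulEquiv.ofBijective Φ ⟨hinj, hsurj⟩, ?_⟩
  intro n j h
  show ((Multiplicative.toAdd (Φ ⟨bsy ^ n * bsx ^ j * (bsy ^ n)⁻¹, h⟩) : D) : ℚ) = _
  rw [hΦ, φ_nf]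
end

section
/- In the Baumslag-Gersten group G = ⟨x, y, t | y⁻¹xy = x², t⁻¹xt = y⟩, for each g in the centralizer of x in the Baumslag-Solitar subgroup, the endomorphism defined by x ↦ x, y ↦ y, t ↦ gt is a group automorphism of G, with inverse given by x ↦ x, y ↦ y, t ↦ g⁻¹t. -/
/-- Relators for the Baumslag-Gersten group G = ⟨x, y, t | y⁻¹xy = x², t⁻¹xt = y⟩,
with `0 ↦ x`, `1 ↦ y`, `2 ↦ t`. -/
def bgRels : Set (FreeGroup (Fin 3)) :=
  {(FreeGroup.of 1)⁻¹ * FreeGroup.of 0 * FreeGroup.of 1 *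
      (FreeGroup.of 0 * FreeGroup.of 0)⁻¹,
   (FreeGroup.of 2)⁻¹ * FreeGroup.of 0 * FreeGroup.of 2 * (FreeGroup.of 1)⁻¹}

/-- The Baumslag-Gersten group. -/
abbrev BG := PresentedGroup bgRels

/-- The generator x of the Baumslag-Gersten group. -/
def gx : BG := PresentedGroup.of 0

/-- The generator y of the Baumslag-Gersten group. -/
def gy : BG := PresentedGroup.of 1

/-- The generator t of the Baumslag-Gersten group. -/
def gt : BG := PresentedGroup.of 2

lemma bg_rel1 : gy⁻¹ * gx * gy = gx * gx := by
  have h : ((QuotientGroup.mk' (Subgroup.normalClosure bgRels)) :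
      FreeGroup (Fin 3) →* BG) ((FreeGroup.of 1)⁻¹ * FreeGroup.of 0 * FreeGroup.of 1 *
      (FreeGroup.of 0 * FreeGroup.of 0)⁻¹) = 1 := by
    rw [QuotientGroup.mk'_apply, QuotientGroup.eq_one_iff]
    exact Subgroup.subset_normalClosure (Or.inl rfl)
  simp only [map_mul, map_inv] at h
  have := mul_inv_eq_one.mp h
  exact this

lemma bg_rel2 : gt⁻¹ * gx * gt = gy := by
  have h : ((QuotientGroup.mk' (Subgroup.normalClosure bgRels)) :
      FreeGroup (Fin 3) →* BG) ((FreeGroup.of 2)⁻¹ * FreeGroup.of 0 * FreeGroup.of 2 *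
      (FreeGroup.of 1)⁻¹) = 1 := by
    rw [QuotientGroup.mk'_apply, QuotientGroup.eq_one_iff]
    exact Subgroup.subset_normalClosure (Or.inr rfl)
  simp only [map_mul, map_inv] at h
  have := mul_inv_eq_one.mp h
  exact this

/-- Build the endomorphism sending t ↦ h*t for h commuting with x. -/
def bgMap (h : BG) (hhx : h * gx = gx * h) : BG →* BG :=
  PresentedGroup.toGroup (f := ![gx, gy, h * gt])
    (by
      intro r hr
      rcases hr with hr | hr <;> subst hr <;>
        simp only [map_mul, map_inv, FreeGroup.lift_apply_of, Matrix.cons_val_zero,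
          Matrix.cons_val_one, Matrix.head_cons, Matrix.cons_val_two, Matrix.tail_cons] <;>
        rw [mul_inv_eq_one]
      · exact bg_rel1
      · have hc : h⁻¹ * gx * h = gx := by
          rw [mul_assoc, inv_mul_eq_iff_eq_mul]; exact hhx.symm
        rw [← bg_rel2, mul_inv_rev,
          show gt⁻¹ * h⁻¹ * gx * (h * gt) = gt⁻¹ * (h⁻¹ * gx * h) * gt by group, hc])

lemma bgMap_gx (h : BG) (hhx : h * gx = gx * h) : bgMap h hhx gx = gx :=
  PresentedGroup.toGroup.of _

lemma bgMap_gy (h : BG) (hhx : h * gx = gx * h) : bgMap h hhx gy = gy :=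
  PresentedGroup.toGroup.of _

lemma bgMap_gt (h : BG) (hhx : h * gx = gx * h) : bgMap h hhx gt = h * gt :=
  PresentedGroup.toGroup.of _

lemma bgMap_fix (h : BG) (hhx : h * gx = gx * h) {z : BG}
    (hz : z ∈ Subgroup.closure {gx, gy}) : bgMap h hhx z = z := by
  induction hz using Subgroup.closure_induction with
  | mem w hw =>
    rcases hw with hw | hw <;> subst hw
    · exact bgMap_gx h hhx
    · exact bgMap_gy h hhx
  | one => exact map_one _
  | mul a b _ _ ha hb => rw [map_mul, ha, hb]
  | inv a _ ha => rw [map_inv, ha]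

/-- In the Baumslag-Gersten group, for g in the centralizer of x inside the
Baumslag-Solitar subgroup ⟨x, y⟩, the endomorphism x ↦ x, y ↦ y, t ↦ gt is an
automorphism, with inverse x ↦ x, y ↦ y, t ↦ g⁻¹t. -/
theorem bg_endo_is_automorphism (g : BG)
    (hg : g ∈ Subgroup.closure {gx, gy}) (hgx : g * gx = gx * g) :
    ∃ F F' : BG →* BG,
      F gx = gx ∧ F gy = gy ∧ F gt = g * gt ∧
      F' gx = gx ∧ F' gy = gy ∧ F' gt = g⁻¹ * gt ∧
      F'.comp F = MonoidHom.id BG ∧ F.comp F' = MonoidHom.id BG := by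
  have hginv : g⁻¹ * gx = gx * g⁻¹ := by
    rw [inv_mul_eq_iff_eq_mul, ← mul_assoc, hgx, mul_assoc, mul_inv_cancel, mul_one]
  have hginvmem : g⁻¹ ∈ Subgroup.closure {gx, gy} := inv_mem hg
  refine ⟨bgMap g hgx, bgMap g⁻¹ hginv, bgMap_gx _ _, bgMap_gy _ _, bgMap_gt _ _,
    bgMap_gx _ _, bgMap_gy _ _, bgMap_gt _ _, ?_, ?_⟩
  · apply PresentedGroup.ext
    intro i
    fin_cases i <;> simp only [MonoidHom.comp_apply, MonoidHom.id_apply]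
    · exact (congrArg _ (bgMap_gx g hgx)).trans (bgMap_gx g⁻¹ hginv)
    · exact (congrArg _ (bgMap_gy g hgx)).trans (bgMap_gy g⁻¹ hginv)
    · show bgMap g⁻¹ hginv (bgMap g hgx gt) = gt
      rw [bgMap_gt, map_mul, bgMap_gt, bgMap_fix g⁻¹ hginv hg, mul_inv_cancel_left]
  · apply PresentedGroup.ext
    intro i
    fin_cases i <;> simp only [MonoidHom.comp_apply, MonoidHom.id_apply]
    · exact (congrArg _ (bgMap_gx g⁻¹ hginv)).trans (bgMap_gx g hgx)
    · exact (congrArg _ (bgMap_gy g⁻¹ hginv)).trans (bgMap_gy g hgx)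
    · show bgMap g hgx (bgMap g⁻¹ hginv gt) = gt
      rw [bgMap_gt, map_mul, bgMap_gt, bgMap_fix g hgx hginvmem, inv_mul_cancel_left]
end

section
/- In the Baumslag-Gersten group G = ⟨x, y, t | y⁻¹xy = x², t⁻¹xt = y⟩, the centralizer of the subgroup generated by x and y is trivial. -/
open HNNExtension NormalWord
namespace BGAux
variable {G : Type*} [Group G] {A B : Subgroup G} {φ : A ≃* B}

lemma exists_reduced (g : HNNExtension G A B φ) : ∃ w : ReducedWord G A B, w.prod φ = g := by
  obtain ⟨d⟩ := TransversalPair.nonempty G A B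
  exact ⟨(g • (NormalWord.empty (d := d))).toReducedWord, by
    simpa using NormalWord.prod_smul φ g (NormalWord.empty (d := d))⟩

lemma chain_concat_mod {l : List (ℤˣ × G)} {p : ℤˣ × G} {c : G}
    (h : (l ++ [p]).IsChain (fun a b => a.2 ∈ toSubgroup A B a.1 → a.1 = b.1)) :
    (l ++ [(p.1, p.2 * c)]).IsChain (fun a b => a.2 ∈ toSubgroup A B a.1 → a.1 = b.1) := by
  rw [List.isChain_append] at h ⊢
  refine ⟨h.1, List.isChain_singleton _, ?_⟩
  intro x hx y hy
  simp only [List.head?_cons, Option.mem_def, Option.some.injEq] at hy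
  subst hy
  exact fun hm => h.2.2 x hx p (by simp) hm

lemma prod_mk (h : G) (l : List (ℤˣ × G)) (hc) :
    (ReducedWord.prod φ ⟨h, l, hc⟩) =
      of h * (l.map (fun x => t ^ (x.1 : ℤ) * of x.2)).prod := rfl

/-- The key "peel" lemma : if `w.prod` almost commutes with `of z`
(`w.prod * of z = of z' * w.prod`) and `w` has nonempty list starting with `t^u`, then
`w.head⁻¹ * z' * w.head ∈ toSubgroup A B (-u)`. -/
lemma peel (w : ReducedWord G A B) (u : ℤˣ) (g₁ : G) (l' : List (ℤˣ × G))
    (hw : w.toList = (u, g₁) :: l') (z z' : G)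
    (hzz : w.prod φ * of z = of z' * w.prod φ) :
    w.head⁻¹ * z' * w.head ∈ toSubgroup A B (-u) := by
  obtain ⟨l₀, p, hl⟩ : ∃ L b, w.toList = L ++ [b] := by
    rcases w.toList.eq_nil_or_concat' with h | h
    · rw [hw] at h; simp at h
    · exact h
  have chain0 : (l₀ ++ [p]).IsChain (fun a b => a.2 ∈ toSubgroup A B a.1 → a.1 = b.1) :=
    hl ▸ w.chain
  have chain1 := chain_concat_mod (c := z) chain0
  set w1 : ReducedWord G A B := ⟨w.head, l₀ ++ [(p.1, p.2 * z)], chain1⟩ with hw1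
  set w2 : ReducedWord G A B := ⟨z' * w.head, w.toList, w.chain⟩ with hw2
  have h1 : w1.prod φ = w.prod φ * of z := by
    rcases w with ⟨wh, wl, wc⟩
    simp only at hl
    subst hl
    rw [prod_mk, prod_mk]
    simp [mul_assoc]
  have h2 : w2.prod φ = of z' * w.prod φ := by
    rcases w with ⟨wh, wl, wc⟩
    rw [prod_mk, prod_mk]
    simp [mul_assoc]
  have hkey := ReducedWord.map_fst_eq_and_of_prod_eq φ
    (w₁ := w1) (w₂ := w2) (by rw [h1, h2, hzz])
  have hfst : w1.toList.map Prod.fst = w.toList.map Prod.fst := by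
    rw [hl]; show (l₀ ++ [(p.1, p.2 * z)]).map _ = _
    simp
  have hu : u ∈ Option.map Prod.fst w1.toList.head? := by
    rw [← List.head?_map, hfst, List.head?_map, hw]
    simp
  have := hkey.2 u hu
  simpa [mul_assoc] using this



noncomputable section

abbrev Mz := Multiplicative ℤ

def dbl : Mz →* Mz := zpowersHom Mz (Multiplicative.ofAdd 2)

lemma toAdd_dbl (m : Mz) : Multiplicative.toAdd (dbl m) = 2 * Multiplicative.toAdd m := by
  simp [dbl, zpowersHom_apply, toAdd_zpow]; ring

lemma dbl_inj : Function.Injective dbl := by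
  intro a b h
  have h2 := congrArg Multiplicative.toAdd h
  rw [toAdd_dbl, toAdd_dbl] at h2
  exact Multiplicative.toAdd.injective (by omega)

def A₀ : Subgroup Mz := dbl.range

def φ₀ : A₀ ≃* (⊤ : Subgroup Mz) :=
  (MonoidHom.ofInjective dbl_inj).symm.trans Subgroup.topEquiv.symm

lemma φ₀_coe (m : Mz) : (φ₀ ⟨dbl m, ⟨m, rfl⟩⟩ : Mz) = m := by
  have h1 : (MonoidHom.ofInjective dbl_inj) m = ⟨dbl m, ⟨m, rfl⟩⟩ := Subtype.ext rfl
  have h2 : (MonoidHom.ofInjective dbl_inj).symm ⟨dbl m, ⟨m, rfl⟩⟩ = m := by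
    rw [← h1, MulEquiv.symm_apply_apply]
  exact congrArg (fun z : Mz => z) h2

lemma φ₀_symm_coe (z : Mz) (hz : z ∈ (⊤ : Subgroup Mz)) :
    ((φ₀.symm ⟨z, hz⟩ : A₀) : Mz) = dbl z := rfl

/-- The Baumslag–Solitar group `BS(1,2)` as an HNN extension of `ℤ`. -/
abbrev Hgp := HNNExtension Mz A₀ ⊤ φ₀

/-- The generator `x` of `BS(1,2)`. -/
def xH : Hgp := of (Multiplicative.ofAdd 1)

/-- `t`-exponent-sum homomorphism on `BS(1,2)`. -/
def degH : Hgp →* Mz := HNNExtension.lift 1 (Multiplicative.ofAdd 1) (by intro a; simp)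

@[simp] lemma degH_of (m : Mz) : degH (of m) = 1 := by simp [degH]
@[simp] lemma degH_t : degH t = Multiplicative.ofAdd 1 := by simp [degH]

def trQ : Mz →* Equiv.Perm ℚ where
  toFun m := Equiv.addRight ((Multiplicative.toAdd m : ℤ) : ℚ)
  map_one' := by ext q; simp
  map_mul' a b := by ext q; simp [Equiv.Perm.mul_apply]; push_cast; ring

def sQ : Equiv.Perm ℚ := Equiv.mulLeft₀ (2⁻¹ : ℚ) (by norm_num)

def ρ : Hgp →* Equiv.Perm ℚ := HNNExtension.lift trQ sQ (by
  intro a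
  obtain ⟨m, hm⟩ := a.2
  have ha : a = ⟨dbl m, ⟨m, rfl⟩⟩ := Subtype.ext hm.symm
  subst ha
  rw [φ₀_coe]
  ext q
  simp [trQ, sQ, Equiv.Perm.mul_apply, toAdd_dbl]
  ring)

@[simp] lemma ρ_of (m : Mz) : ρ (of m) = trQ m := by simp [ρ]

lemma trQ_eq_one {m : Mz} (h : trQ m = 1) : m = 1 := by
  have h2 := congrArg (fun (e : Equiv.Perm ℚ) => e 0) h
  simp only [trQ, MonoidHom.coe_mk, OneHom.coe_mk, Equiv.coe_addRight, Equiv.Perm.coe_one,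
    id_eq, zero_add] at h2
  exact Multiplicative.toAdd.injective (by exact_mod_cast h2)

lemma xH_ne_one : xH ≠ 1 := by
  intro h
  have h1 : trQ (Multiplicative.ofAdd 1) = 1 := by
    simpa [xH] using congrArg ρ h
  have := trQ_eq_one h1
  simp at this

def axH : Mz →* Hgp := zpowersHom Hgp xH
def ayH : Mz →* Hgp := zpowersHom Hgp t

lemma ax_inj : Function.Injective axH := by
  have hcomp : ρ.comp axH = trQ := by
    apply MonoidHom.ext_mint
    simp [axH, zpowersHom_apply, xH]
  intro a b h
  have h2 : trQ a = trQ b := by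
    rw [← hcomp]; simp [h]
  have h3 := congrArg (fun (e : Equiv.Perm ℚ) => e 0) h2
  simp only [trQ, MonoidHom.coe_mk, OneHom.coe_mk, Equiv.coe_addRight, zero_add] at h3
  exact Multiplicative.toAdd.injective (by exact_mod_cast h3)

lemma ay_inj : Function.Injective ayH := by
  have hcomp : degH.comp ayH = MonoidHom.id Mz := by
    apply MonoidHom.ext_mint
    show degH (t ^ (Multiplicative.toAdd (Multiplicative.ofAdd 1))) = _
    simp
  intro a b h
  have h2 := congrArg degH h
  change (degH.comp ayH) a = (degH.comp ayH) b at h2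
  rwa [hcomp] at h2



lemma all_eq_of_concat_eq_cons {α : Type*} (a : α) :
    ∀ l : List α, l ++ [a] = a :: l → ∀ x ∈ l, x = a := by
  intro l
  induction l with
  | nil => simp
  | cons b l ih =>
    intro h x hx
    rw [List.cons_append, List.cons_eq_cons] at h
    obtain ⟨rfl, h2⟩ := h
    rcases List.mem_cons.1 hx with rfl | hx
    · rfl
    · exact ih h2 x hx

lemma of_t_comm (z : Mz) : (of z : Hgp) * t = t * of (dbl z) := by
  have h := of_mul_t (φ := φ₀) ⟨z, Subgroup.mem_top z⟩
  rwa [φ₀_symm_coe] at h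

lemma step2 (l : List (ℤˣ × Mz)) :
    ∀ (h₀ z z' : Mz) (hc : l.IsChain fun a b => a.2 ∈ toSubgroup A₀ ⊤ a.1 → a.1 = b.1),
      (∀ p ∈ l, p.1 = 1) →
      ReducedWord.prod φ₀ ⟨h₀, l, hc⟩ * of z = of z' * ReducedWord.prod φ₀ ⟨h₀, l, hc⟩ →
      Multiplicative.toAdd z = 2 ^ l.length * Multiplicative.toAdd z' := by
  induction l with
  | nil =>
    intro h₀ z z' hc _ heq
    rw [prod_mk] at heq
    simp only [List.map_nil, List.prod_nil, mul_one] at heq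
    rw [← map_mul, ← map_mul] at heq
    have h2 := of_injective φ₀ heq
    have h3 := congrArg Multiplicative.toAdd h2
    simp only [toAdd_mul] at h3
    simp only [List.length_nil, pow_zero, one_mul]
    omega
  | cons p l ih =>
    intro h₀ z z' hc hall heq
    have hp1 : p.1 = 1 := hall p (List.mem_cons_self)
    have hctail : l.IsChain fun a b => a.2 ∈ toSubgroup A₀ ⊤ a.1 → a.1 = b.1 :=
      (List.isChain_cons.1 hc).2
    set P : Hgp := ReducedWord.prod φ₀ ⟨p.2, l, hctail⟩ with hP
    have e1 : ReducedWord.prod φ₀ ⟨h₀, p :: l, hc⟩ = of h₀ * (t * P) := by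
      rw [hP, prod_mk, prod_mk, List.map_cons, List.prod_cons, hp1]
      simp [mul_assoc]
    rw [e1] at heq
    have e2 : of z' * (of h₀ * (t * P)) = of h₀ * (t * (of (dbl z') * P)) := by
      rw [← mul_assoc, ← map_mul, mul_comm z' h₀, map_mul, mul_assoc,
        ← mul_assoc (of z') t P, of_t_comm, mul_assoc]
    rw [e2, mul_assoc (of h₀) (t * P) (of z), mul_assoc t P (of z)] at heq
    have heq2 : P * of z = of (dbl z') * P := mul_left_cancel (mul_left_cancel heq)
    have hall' : ∀ q ∈ l, q.1 = 1 := fun q hq => hall q (List.mem_cons_of_mem _ hq)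
    have := ih p.2 z (dbl z') hctail hall' heq2
    rw [this, toAdd_dbl]
    simp [List.length_cons, pow_succ]
    ring

lemma two_pow_ne_one {n : ℕ} (hn : n ≠ 0) : (2 : ℤ) ^ n ≠ 1 := by
  have h1 : (2:ℤ) ^ 1 ≤ 2 ^ n := pow_le_pow_right₀ (by norm_num) (by omega)
  simp at h1; omega

lemma inner_triv (h : Hgp) (hx : h * of (Multiplicative.ofAdd 1) = of (Multiplicative.ofAdd 1) * h)
    (ht : h * t = t * h) : h = 1 := by
  obtain ⟨w, hw⟩ := exists_reduced (φ := φ₀) h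
  obtain ⟨wh, wl, wc⟩ := w
  rcases hlist : wl with _ | ⟨⟨v, k⟩, m'⟩
  · -- empty list : h = of wh
    subst hlist
    have hh : h = of wh := by rw [← hw, prod_mk]; simp
    rw [hh, of_t_comm] at ht
    have h2 := of_injective φ₀ (mul_left_cancel ht.symm)
    have h3 := congrArg Multiplicative.toAdd h2
    rw [toAdd_dbl] at h3
    have h4 : wh = 1 := Multiplicative.toAdd.injective
      (show Multiplicative.toAdd wh = Multiplicative.toAdd 1 by rw [toAdd_one]; omega)
    rw [hh, h4, map_one]
  · exfalso
    subst hlist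
    have hx' : ReducedWord.prod φ₀ ⟨wh, (v, k) :: m', wc⟩ * of (Multiplicative.ofAdd 1)
        = of (Multiplicative.ofAdd 1) * ReducedWord.prod φ₀ ⟨wh, (v, k) :: m', wc⟩ := by
      rw [hw]; exact hx
    have hpeel := peel ⟨wh, (v, k) :: m', wc⟩ v k m' rfl _ _ hx'
    have hcomm : wh⁻¹ * Multiplicative.ofAdd 1 * wh = Multiplicative.ofAdd 1 := by
      rw [mul_comm wh⁻¹ (Multiplicative.ofAdd 1), mul_assoc]
      simp
    rw [hcomm] at hpeel  -- might need : hpeel about (⟨..⟩ : ReducedWord).head = wh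
    have hv : v = 1 := by
      rcases Int.units_eq_one_or v with rfl | rfl
      · rfl
      · exfalso
        rw [show -(-1 : ℤˣ) = 1 from rfl, toSubgroup_one] at hpeel
        obtain ⟨m, hm⟩ := hpeel
        have h5 := congrArg Multiplicative.toAdd hm
        rw [toAdd_dbl] at h5
        simp at h5
        omega
    subst hv
    -- the word for t * h
    have chainb : List.IsChain (fun a b => a.2 ∈ toSubgroup A₀ ⊤ a.1 → a.1 = b.1)
        ((1, wh) :: (1, k) :: m') :=
      List.isChain_cons.2 ⟨by intro y hy; simp at hy; subst hy; exact fun _ => rfl, wc⟩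
    have hwb : ReducedWord.prod φ₀ ⟨1, (1, wh) :: (1, k) :: m', chainb⟩ = t * h := by
      rw [← hw, prod_mk, prod_mk, List.map_cons (l := (1, k) :: m'), List.prod_cons]
      simp [mul_assoc]
    -- decompose from the right
    obtain ⟨m₀, p, hm⟩ : ∃ L b, (1, k) :: m' = L ++ [b] :=
      ((1, k) :: m').eq_nil_or_concat'.resolve_left (by simp)
    rcases Int.units_eq_one_or p.1 with hp1 | hp1
    · -- last letter has exponent +1 : compare word for h * t with word for t * h
      have chaina : List.IsChain (fun a b => a.2 ∈ toSubgroup A₀ ⊤ a.1 → a.1 = b.1)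
          (((1, k) :: m') ++ [(1, (1 : Mz))]) := by
        rw [List.isChain_append]
        refine ⟨wc, List.isChain_singleton _, ?_⟩
        intro x hx' y hy
        rw [hm, List.getLast?_concat] at hx'
        simp at hx' hy
        subst hx'; subst hy
        intro _
        simp [hp1]
      have hwa : ReducedWord.prod φ₀ ⟨wh, ((1, k) :: m') ++ [(1, (1 : Mz))], chaina⟩
          = h * t := by
        rw [← hw, prod_mk, prod_mk, List.map_append, List.prod_append]
        simp [mul_assoc]
      have hkey := (ReducedWord.map_fst_eq_and_of_prod_eq φ₀
        (w₁ := ⟨wh, ((1, k) :: m') ++ [(1, (1 : Mz))], chaina⟩)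
        (w₂ := ⟨1, (1, wh) :: (1, k) :: m', chainb⟩)
        (by rw [hwa, hwb]; exact ht)).1
      simp only [List.map_append, List.map_cons] at hkey
      -- hkey : map fst ((1,k)::m') ++ [1] = 1 :: map fst ((1,k)::m')
      have hall : ∀ q ∈ ((1, k) :: m'), q.1 = (1 : ℤˣ) := by
        intro q hq
        exact all_eq_of_concat_eq_cons 1 (((1, k) :: m').map Prod.fst) (by simpa using hkey)
          q.1 (List.mem_map_of_mem (f := Prod.fst) hq)
      have hstep := step2 ((1, k) :: m') wh (Multiplicative.ofAdd 1) (Multiplicative.ofAdd 1)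
        wc hall hx'
      simp at hstep
      exact two_pow_ne_one (by simp) hstep.symm
    · -- last letter has exponent -1 : h * t pinches, giving a length contradiction
      -- m₀ itself is nonempty
      obtain ⟨m₁, q, hm₁⟩ : ∃ L b, m₀ = L ++ [b] := by
        rcases m₀.eq_nil_or_concat' with h0 | h0
        · exfalso
          rw [h0] at hm
          simp at hm
          have h6 : p.1 = (1 : ℤˣ) := by rw [← hm.1]
          rw [h6] at hp1
          exact absurd hp1 (by decide)
        · exact h0
      have wc' : List.IsChain (fun a b => a.2 ∈ toSubgroup A₀ ⊤ a.1 → a.1 = b.1)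
          ((m₁ ++ [q]) ++ [p]) := by rw [← hm₁, ← hm]; exact wc
      have chainq : List.IsChain (fun a b => a.2 ∈ toSubgroup A₀ ⊤ a.1 → a.1 = b.1)
          (m₁ ++ [q]) := (List.isChain_append.1 wc').1
      have chaina := chain_concat_mod (c := dbl p.2) chainq
      have hwa : ReducedWord.prod φ₀ ⟨wh, m₁ ++ [(q.1, q.2 * dbl p.2)], chaina⟩ = h * t := by
        rw [← hw, prod_mk, prod_mk, hm, hm₁]
        rw [List.map_append, List.prod_append, List.map_append, List.prod_append]
        simp only [List.map_cons, List.map_nil, List.prod_cons, List.prod_nil, mul_one]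
        rw [hp1]
        have hpinch : (t : Hgp) ^ ((-1 : ℤˣ) : ℤ) * of p.2 * t = of (dbl p.2) := by
          rw [show ((-1 : ℤˣ) : ℤ) = -1 from rfl, zpow_neg_one]
          rw [← φ₀_symm_coe p.2 trivial]
          exact (equiv_symm_eq_conj (φ := φ₀) ⟨p.2, trivial⟩).symm
        rw [map_mul]
        calc of wh * ((List.map (fun x => t ^ (x.1 : ℤ) * of x.2) m₁).prod *
              ((t ^ ((q.1 : ℤ)) * (of q.2 * of (dbl p.2)))))
            = of wh * ((List.map (fun x => t ^ (x.1 : ℤ) * of x.2) m₁).prod *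
              (t ^ ((q.1 : ℤ)) * of q.2)) * (t ^ ((-1 : ℤˣ) : ℤ) * of p.2 * t) := by
              rw [hpinch]; simp [mul_assoc]
          _ = _ := by simp [mul_assoc]
      have hkey := (ReducedWord.map_fst_eq_and_of_prod_eq φ₀
        (w₁ := ⟨wh, m₁ ++ [(q.1, q.2 * dbl p.2)], chaina⟩)
        (w₂ := ⟨1, (1, wh) :: (1, k) :: m', chainb⟩)
        (by rw [hwa, hwb]; exact ht)).1
      have hlen := congrArg List.length hkey
      simp only [List.length_map, List.length_append, List.length_cons] at hlen
      rw [hm₁] at hm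
      have hlen2 := congrArg List.length hm
      simp only [List.length_append, List.length_cons] at hlen2
      simp at hlen hlen2 ⊢
      omega

def ψ' : (ayH.range : Subgroup Hgp) ≃* (axH.range : Subgroup Hgp) :=
  (MonoidHom.ofInjective ay_inj).symm.trans (MonoidHom.ofInjective ax_inj)

lemma ψ'_coe (n : Mz) (hn : ayH n ∈ ayH.range) : ((ψ' ⟨ayH n, hn⟩ : axH.range) : Hgp) = axH n := by
  have h1 : (MonoidHom.ofInjective ay_inj) n = ⟨ayH n, hn⟩ := Subtype.ext rfl
  have h2 : (MonoidHom.ofInjective ay_inj).symm ⟨ayH n, hn⟩ = n := by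
    rw [← h1, MulEquiv.symm_apply_apply]
  show ((MonoidHom.ofInjective ax_inj) ((MonoidHom.ofInjective ay_inj).symm ⟨ayH n, hn⟩) : Hgp)
    = axH n
  rw [h2]
  rfl

/-- The Baumslag–Gersten group as an HNN extension of `BS(1,2)`. -/
abbrev Kgp := HNNExtension Hgp ayH.range axH.range ψ'

lemma outer_triv (g : Kgp) (hgx : g * of xH = of xH * g) (hgy : g * of t = of t * g) :
    g = 1 := by
  obtain ⟨w, hw⟩ := exists_reduced (φ := ψ') g
  obtain ⟨wh, wl, wc⟩ := w
  rcases hlist : wl with _ | ⟨⟨v, k⟩, m'⟩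
  · -- empty word : g = of wh with wh in BS(1,2) commuting with x and t
    subst hlist
    have hh : g = of wh := by rw [← hw, prod_mk]; simp
    rw [hh, ← map_mul, ← map_mul] at hgx hgy
    have h1 : wh * xH = xH * wh := of_injective ψ' hgx
    have h2 : wh * t = t * wh := of_injective ψ' hgy
    rw [hh, inner_triv wh h1 h2, map_one]
  · exfalso
    subst hlist
    have hgx' : ReducedWord.prod ψ' ⟨wh, (v, k) :: m', wc⟩ * of xH
        = of xH * ReducedWord.prod ψ' ⟨wh, (v, k) :: m', wc⟩ := by rw [hw]; exact hgx
    have hgy' : ReducedWord.prod ψ' ⟨wh, (v, k) :: m', wc⟩ * of t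
        = of t * ReducedWord.prod ψ' ⟨wh, (v, k) :: m', wc⟩ := by rw [hw]; exact hgy
    have hpeelx := peel ⟨wh, (v, k) :: m', wc⟩ v k m' rfl _ _ hgx'
    have hpeely := peel ⟨wh, (v, k) :: m', wc⟩ v k m' rfl _ _ hgy'
    rcases Int.units_eq_one_or v with rfl | rfl
    · -- v = 1 : the conjugate of t would be a power of x, contradicting deg
      rw [show -(1 : ℤˣ) = -1 from rfl, toSubgroup_neg_one] at hpeely
      obtain ⟨n, hn⟩ := hpeely
      have hdeg := congrArg degH hn
      have hL : degH (axH n) = 1 := by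
        show degH (xH ^ Multiplicative.toAdd n) = 1
        rw [map_zpow]
        simp [xH]
      have hR : degH ((⟨wh, (1, k) :: m', wc⟩ : ReducedWord Hgp ayH.range axH.range).head⁻¹
          * t * (⟨wh, (1, k) :: m', wc⟩ : ReducedWord Hgp ayH.range axH.range).head)
          = Multiplicative.ofAdd 1 := by
        show degH (wh⁻¹ * t * wh) = _
        rw [map_mul, map_mul, map_inv]
        rw [mul_comm (degH wh)⁻¹ (degH t), mul_assoc]
        simp
      rw [hL, hR] at hdeg
      exact absurd (congrArg Multiplicative.toAdd hdeg) (by simp)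
    · -- v = -1 : the conjugate of x would be a power of t, contradicting deg
      rw [show -(-1 : ℤˣ) = 1 from rfl, toSubgroup_one] at hpeelx
      obtain ⟨n, hn⟩ := hpeelx
      have hdeg := congrArg degH hn
      have hL : degH (ayH n) = Multiplicative.ofAdd (Multiplicative.toAdd n) := by
        show degH (t ^ Multiplicative.toAdd n) = _
        rw [map_zpow, degH_t]
        simp [← ofAdd_zsmul]
      have hR : degH ((⟨wh, (-1, k) :: m', wc⟩ : ReducedWord Hgp ayH.range axH.range).head⁻¹
          * xH * (⟨wh, (-1, k) :: m', wc⟩ : ReducedWord Hgp ayH.range axH.range).head) = 1 := by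
        show degH (wh⁻¹ * xH * wh) = _
        rw [map_mul, map_mul, map_inv]
        rw [mul_comm (degH wh)⁻¹ (degH xH), mul_assoc]
        simp [xH]
      rw [hL, hR] at hdeg
      -- n = 1 so head⁻¹ * xH * head = 1, so xH = 1, contradiction
      have hn0 : Multiplicative.toAdd n = 0 := by
        have := congrArg Multiplicative.toAdd hdeg
        simpa using this
      have hayn : ayH n = 1 := by
        show t ^ Multiplicative.toAdd n = 1
        rw [hn0, zpow_zero]
      rw [hayn] at hn
      have hxH1 : xH = 1 := by
        have h5 : wh⁻¹ * xH * wh = 1 := by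
          rw [← hn]
        have := congrArg (fun z => wh * z * wh⁻¹) h5
        simpa [mul_assoc] using this
      exact xH_ne_one hxH1

/-! ### Relations in the Baumslag–Gersten group -/

lemma mk_rel (r : FreeGroup (Fin 3)) (hr : r ∈ bgRels) : (QuotientGroup.mk r : BG) = 1 :=
  (QuotientGroup.eq_one_iff r).2 (Subgroup.subset_normalClosure hr)

lemma bg_rel1 : gy⁻¹ * gx * gy = gx * gx := by
  have h := mk_rel _ (Set.mem_insert _ _)
  have h2 : (QuotientGroup.mk ((FreeGroup.of 1)⁻¹ * FreeGroup.of 0 * FreeGroup.of 1 *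
      (FreeGroup.of 0 * FreeGroup.of 0)⁻¹) : BG) = gy⁻¹ * gx * gy * (gx * gx)⁻¹ := rfl
  rw [h2] at h
  exact mul_inv_eq_one.1 h

lemma bg_rel2 : gt⁻¹ * gx * gt = gy := by
  have h := mk_rel _ (Set.mem_insert_of_mem _ rfl)
  have h2 : (QuotientGroup.mk ((FreeGroup.of 2)⁻¹ * FreeGroup.of 0 * FreeGroup.of 2 *
      (FreeGroup.of 1)⁻¹) : BG) = gt⁻¹ * gx * gt * gy⁻¹ := rfl
  rw [h2] at h
  exact mul_inv_eq_one.1 h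

lemma conj_zpow_helper {Γ : Type*} [Group Γ] (a b c : Γ) (h : a⁻¹ * b * a = c) (k : ℤ) :
    a⁻¹ * b ^ k * a = c ^ k := by
  subst h
  have h2 := map_zpow (MulAut.conj a⁻¹) b k
  simpa [MulAut.conj_apply, mul_assoc] using h2

/-! ### The homomorphism `Hgp →* BG` and `Kgp →* BG` -/

def fH : Hgp →* BG := HNNExtension.lift (zpowersHom BG gx) gy (by
  intro a
  obtain ⟨m, hm⟩ := a.2
  have ha : a = ⟨dbl m, ⟨m, rfl⟩⟩ := Subtype.ext hm.symm
  subst ha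
  rw [φ₀_coe]
  show gy * gx ^ Multiplicative.toAdd (dbl m) = gx ^ Multiplicative.toAdd m * gy
  rw [toAdd_dbl]
  have h7 : gy⁻¹ * gx ^ Multiplicative.toAdd m * gy = gx ^ (2 * Multiplicative.toAdd m) := by
    have := conj_zpow_helper gy gx (gx * gx) bg_rel1 (Multiplicative.toAdd m)
    rw [this, ← zpow_two, ← zpow_mul, mul_comm (2:ℤ)]
  have h8 : gy * (gy⁻¹ * gx ^ Multiplicative.toAdd m * gy) =
      gy * gx ^ (2 * Multiplicative.toAdd m) := by rw [h7]
  simp only [mul_assoc, mul_inv_cancel_left] at h8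
  rw [← h8])

@[simp] lemma fH_of (m : Mz) : fH (of m) = gx ^ Multiplicative.toAdd m := by simp [fH]
@[simp] lemma fH_t : fH t = gy := by simp [fH]

lemma fH_xH : fH xH = gx := by
  rw [xH, fH_of]
  simp

def kk : Kgp →* BG := HNNExtension.lift fH gt (by
  intro a
  obtain ⟨n, hn⟩ := a.2
  have ha : a = ⟨ayH n, MonoidHom.mem_range.2 ⟨n, rfl⟩⟩ := Subtype.ext hn.symm
  subst ha
  rw [ψ'_coe]
  show gt * fH (t ^ Multiplicative.toAdd n) = fH (xH ^ Multiplicative.toAdd n) * gt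
  rw [map_zpow, map_zpow, fH_t, fH_xH]
  have h7 := conj_zpow_helper gt gx gy bg_rel2 (Multiplicative.toAdd n)
  have h8 : gt * (gt⁻¹ * gx ^ Multiplicative.toAdd n * gt) =
      gt * gy ^ Multiplicative.toAdd n := by rw [h7]
  simp only [mul_assoc, mul_inv_cancel_left] at h8
  rw [h8])

@[simp] lemma kk_of (h : Hgp) : kk (of h) = fH h := by simp [kk]
@[simp] lemma kk_t : kk t = gt := by simp [kk]

/-! ### The homomorphism `BG →* Kgp` -/

lemma relH : (t : Hgp)⁻¹ * xH * t = xH * xH := by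
  have hd : dbl (Multiplicative.ofAdd 1) = Multiplicative.ofAdd 2 := by
    simp [dbl, zpowersHom_apply]
  have h := t_mul_of (φ := φ₀) ⟨dbl (Multiplicative.ofAdd 1), ⟨Multiplicative.ofAdd 1, rfl⟩⟩
  rw [φ₀_coe] at h
  -- h : t * of (dbl (ofAdd 1)) = of (ofAdd 1) * t
  have h2 : (of (dbl (Multiplicative.ofAdd 1)) : Hgp) = xH * xH := by
    rw [hd, xH, ← map_mul, ← ofAdd_add]
    norm_num
  rw [h2] at h
  have h5 : xH * t = t * (xH * xH) := h.symm
  rw [mul_assoc, h5, ← mul_assoc]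
  simp

lemma ay_one : ayH (Multiplicative.ofAdd 1) = t := by
  simp [ayH, zpowersHom_apply]

lemma ax_one : axH (Multiplicative.ofAdd 1) = xH := by
  simp [axH, zpowersHom_apply]

lemma relK : (t : Kgp) * of t = of xH * t := by
  have h := t_mul_of (φ := ψ') ⟨ayH (Multiplicative.ofAdd 1), MonoidHom.mem_range.2 ⟨Multiplicative.ofAdd 1, rfl⟩⟩
  rw [ψ'_coe] at h
  have h' : (t : Kgp) * of (ayH (Multiplicative.ofAdd 1))
      = of (axH (Multiplicative.ofAdd 1)) * t := h
  rw [ay_one, ax_one] at h'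
  exact h' 

def fgen : Fin 3 → Kgp := ![of xH, of t, t]

@[simp] lemma fgen_zero : fgen 0 = of xH := rfl
@[simp] lemma fgen_one : fgen 1 = of t := rfl
@[simp] lemma fgen_two : fgen 2 = t := rfl

lemma fgen_rels : ∀ r ∈ bgRels, FreeGroup.lift fgen r = 1 := by
  intro r hr
  rcases Set.mem_insert_iff.1 hr with rfl | hr
  · simp only [map_mul, map_inv, FreeGroup.lift_apply_of, fgen_zero, fgen_one]
    have h10 : ((of t : Kgp))⁻¹ * of xH * of t = of xH * of xH := by
      have h11 := congrArg (of : Hgp →* Kgp) relH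
      simp only [map_mul, map_inv] at h11
      exact h11
    rw [h10]
    group
  · rw [Set.mem_singleton_iff.1 hr]
    simp only [map_mul, map_inv, FreeGroup.lift_apply_of, fgen_zero, fgen_one, fgen_two]
    have h9 : (t : Kgp)⁻¹ * of xH * t = of t := by
      rw [mul_assoc, ← relK, ← mul_assoc]
      simp
    rw [h9]
    group

def fBG : BG →* Kgp := PresentedGroup.toGroup fgen_rels

lemma fBG_gx : fBG gx = of xH := by
  show fBG (PresentedGroup.of 0) = _
  rw [fBG, PresentedGroup.toGroup.of]
  rfl

lemma fBG_gy : fBG gy = of t := by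
  show fBG (PresentedGroup.of 1) = _
  rw [fBG, PresentedGroup.toGroup.of]
  rfl

lemma fBG_gt : fBG gt = t := by
  show fBG (PresentedGroup.of 2) = _
  rw [fBG, PresentedGroup.toGroup.of]
  rfl

lemma kk_fBG (g : BG) : kk (fBG g) = g := by
  have h : kk.comp fBG = MonoidHom.id BG := by
    apply PresentedGroup.ext
    intro i
    fin_cases i
    · show kk (fBG gx) = gx
      rw [fBG_gx, kk_of, fH_xH]
    · show kk (fBG gy) = gy
      rw [fBG_gy, kk_of, fH_t]
    · show kk (fBG gt) = gt
      rw [fBG_gt, kk_t]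
  exact DFunLike.congr_fun h g

end
end BGAux

open BGAux in
/-- In the Baumslag-Gersten group, the centralizer of the subgroup generated by
x and y is trivial. -/
theorem bg_centralizer_of_bs_subgroup_trivial :
    Subgroup.centralizer ((Subgroup.closure {gx, gy} : Subgroup BG) : Set BG) = ⊥ := by
  apply Subgroup.ext
  intro g
  simp only [Subgroup.mem_bot]
  constructor
  · intro hg
    have hxmem : gx ∈ ((Subgroup.closure {gx, gy} : Subgroup BG) : Set BG) :=
      Subgroup.subset_closure (Set.mem_insert _ _)
    have hymem : gy ∈ ((Subgroup.closure {gx, gy} : Subgroup BG) : Set BG) :=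
      Subgroup.subset_closure (Set.mem_insert_of_mem _ rfl)
    have hx := Subgroup.mem_centralizer_iff.1 hg gx hxmem
    have hy := Subgroup.mem_centralizer_iff.1 hg gy hymem
    have h1 : fBG g * HNNExtension.of xH = HNNExtension.of xH * fBG g := by
      rw [← fBG_gx, ← map_mul, ← map_mul, hx]
    have h2 : fBG g * HNNExtension.of HNNExtension.t = HNNExtension.of HNNExtension.t * fBG g := by
      rw [← fBG_gy, ← map_mul, ← map_mul, hy]
    have h3 := outer_triv (fBG g) h1 h2
    have h4 := congrArg kk h3
    rwa [kk_fBG, map_one] at h4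
  · rintro rfl
    exact Subgroup.one_mem _
end

section
/- The map from the centralizer C_H(x) of x in the Baumslag-Solitar group H = ⟨x, y | y⁻¹xy = x²⟩ to the outer automorphism group Out(G) of the Baumslag-Gersten group G = ⟨x, y, t | y⁻¹xy = x², t⁻¹xt = y⟩, sending g to the class of the automorphism x ↦ x, y ↦ y, t ↦ gt, is an injective group homomorphism. -/
/-! ### The affine group over ℚ -/

@[ext] structure Aff : Type where
  a : ℚ
  u : ℚˣ

namespace Aff

instance : Mul Aff := ⟨fun p q => ⟨p.a + (p.u : ℚ) * q.a, p.u * q.u⟩⟩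
instance : One Aff := ⟨⟨0, 1⟩⟩
instance : Inv Aff := ⟨fun p => ⟨-((p.u⁻¹ : ℚˣ) : ℚ) * p.a, p.u⁻¹⟩⟩

@[simp] lemma mul_a' (p q : Aff) : (p * q).a = p.a + (p.u : ℚ) * q.a := rfl
@[simp] lemma mul_u' (p q : Aff) : (p * q).u = p.u * q.u := rfl
@[simp] lemma one_a' : (1 : Aff).a = 0 := rfl
@[simp] lemma one_u' : (1 : Aff).u = 1 := rfl
@[simp] lemma inv_a' (p : Aff) : (p⁻¹).a = -((p.u⁻¹ : ℚˣ) : ℚ) * p.a := rfl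
@[simp] lemma inv_u' (p : Aff) : (p⁻¹).u = p.u⁻¹ := rfl

@[simp] lemma mk_a (a : ℚ) (u : ℚˣ) : (Aff.mk a u).a = a := rfl
@[simp] lemma mk_u (a : ℚ) (u : ℚˣ) : (Aff.mk a u).u = u := rfl

instance : Group Aff where
  mul_assoc p q r := by refine Aff.ext ?_ ?_ <;> simp [mul_assoc] <;> ring
  one_mul p := by refine Aff.ext ?_ ?_ <;> simp
  mul_one p := by refine Aff.ext ?_ ?_ <;> simp
  inv_mul_cancel p := by refine Aff.ext ?_ ?_ <;> simp

/-- translation part as hom from `Multiplicative ℚ` -/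
def tr : Multiplicative ℚ →* Aff where
  toFun q := ⟨q.toAdd, 1⟩
  map_one' := rfl
  map_mul' p q := by refine Aff.ext ?_ ?_ <;> simp

@[simp] lemma tr_a (q : Multiplicative ℚ) : (tr q).a = q.toAdd := rfl
@[simp] lemma tr_u (q : Multiplicative ℚ) : (tr q).u = 1 := rfl

@[simp] lemma tr_zpow (q : ℚ) (n : ℤ) : (tr (.ofAdd q)) ^ n = tr (.ofAdd (n * q)) := by
  rw [← map_zpow]
  congr 1

/-- scaling part as hom from `ℚˣ` -/
def scIn : ℚˣ →* Aff where
  toFun u := ⟨0, u⟩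
  map_one' := rfl
  map_mul' u v := by refine Aff.ext ?_ ?_ <;> simp

@[simp] lemma scIn_a (u : ℚˣ) : (scIn u).a = 0 := rfl
@[simp] lemma scIn_u (u : ℚˣ) : (scIn u).u = u := rfl

/-- the scaling projection -/
def sc : Aff →* ℚˣ where
  toFun p := p.u
  map_one' := rfl
  map_mul' p q := rfl

@[simp] lemma sc_apply (p : Aff) : sc p = p.u := rfl

end Aff

/-- `Multiplicative ℤ ≃* Subgroup.zpowers g` for `g` of infinite order. -/
noncomputable def zpowIso {G : Type*} [Group G] (g : G)
    (hg : ∀ m : ℤ, g ^ m = 1 → m = 0) :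
    Multiplicative ℤ ≃* Subgroup.zpowers g := by
  refine MulEquiv.ofBijective (zpowersHom _ ⟨g, Subgroup.mem_zpowers g⟩) ⟨?_, ?_⟩
  · intro m n h
    have h2 : g ^ m.toAdd = g ^ n.toAdd := by
      have := congrArg (Subtype.val) h
      simpa [zpowersHom_apply, Subgroup.coe_zpow] using this
    have : g ^ (m.toAdd - n.toAdd) = 1 := by
      rw [zpow_sub, h2, mul_inv_cancel]
    have := hg _ this
    have : m.toAdd = n.toAdd := by omega
    exact Multiplicative.toAdd.injective this
  · rintro ⟨-, n, rfl⟩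
    exact ⟨Multiplicative.ofAdd n, by ext; simp [zpowersHom_apply]⟩

@[simp] lemma zpowIso_apply {G : Type*} [Group G] (g : G) (hg) (n : ℤ) :
    ((zpowIso g hg (.ofAdd n) : Subgroup.zpowers g) : G) = g ^ n := by
  simp [zpowIso, zpowersHom_apply]
  rfl

lemma zpowIso_symm_apply {G : Type*} [Group G] (g : G) (hg) (n : ℤ)
    (h : g ^ n ∈ Subgroup.zpowers g) :
    (zpowIso g hg).symm ⟨g ^ n, h⟩ = .ofAdd n := by
  rw [MulEquiv.symm_apply_eq]
  ext
  simp

/-! ### Level 1: the Baumslag–Solitar group BS(1,2) as an HNN extension of ℤ -/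

open HNNExtension Multiplicative

noncomputable section

namespace BGM

abbrev MZ := Multiplicative ℤ

lemma ofAdd_two_inf_order : ∀ m : ℤ, (ofAdd (2:ℤ)) ^ m = 1 → m = 0 := by
  intro m h
  have : m • (2:ℤ) = 0 := by
    have := congrArg Multiplicative.toAdd ((ofAdd_zsmul m (2:ℤ)).trans h)
    simpa using this
  rw [smul_eq_mul] at this
  omega

abbrev A0 : Subgroup MZ := Subgroup.zpowers (ofAdd (2:ℤ))

lemma ofAdd_two_zpow (n : ℤ) : (ofAdd (2:ℤ)) ^ n = ofAdd (2*n) := by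
  rw [← ofAdd_zsmul]
  congr 1
  rw [smul_eq_mul]; ring

lemma mem_A0 (n : ℤ) : ofAdd (2*n) ∈ A0 := ⟨n, by show (ofAdd (2:ℤ)) ^ n = _; rw [ofAdd_two_zpow]⟩

def φ0 : A0 ≃* (⊤ : Subgroup MZ) :=
  (zpowIso (ofAdd (2:ℤ)) ofAdd_two_inf_order).symm.trans Subgroup.topEquiv.symm

lemma φ0_apply (n : ℤ) :
    ((φ0 ⟨ofAdd (2*n), mem_A0 n⟩ : (⊤ : Subgroup MZ)) : MZ) = ofAdd n := by
  have h1 : (ofAdd (2*n)) = (ofAdd (2:ℤ)) ^ n := (ofAdd_two_zpow n).symm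
  have h2 : (⟨ofAdd (2*n), mem_A0 n⟩ : A0) =
      ⟨(ofAdd (2:ℤ)) ^ n, by rw [← h1]; exact mem_A0 n⟩ := by
    ext; exact h1
  rw [φ0, MulEquiv.trans_apply, h2, zpowIso_symm_apply]
  rfl

abbrev H := HNNExtension MZ A0 ⊤ φ0

def xH : H := of (ofAdd 1)
def yH : H := t

lemma xH_zpow (n : ℤ) : xH ^ n = of (ofAdd n) := by
  rw [xH, ← map_zpow, ← ofAdd_zsmul]
  norm_num

lemma rel1H (n : ℤ) : yH * xH ^ (2*n) * yH⁻¹ = xH ^ n := by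
  have := t_mul_of (φ := φ0) ⟨ofAdd (2*n), mem_A0 n⟩
  rw [φ0_apply n] at this
  rw [xH_zpow, xH_zpow, yH]
  rw [mul_inv_eq_iff_eq_mul, this]

/-- scaling by `1/2`. -/
def halfu : ℚˣ := Units.mk0 (2⁻¹ : ℚ) (by norm_num)

@[simp] lemma halfu_val : ((halfu : ℚˣ) : ℚ) = 2⁻¹ := rfl

lemma halfu_zpow_eq_one {n : ℤ} (h : halfu ^ n = 1) : n = 0 := by
  have : ((2⁻¹ : ℚ)) ^ n = 1 := by
    have := congrArg (Units.val) h
    rwa [Units.val_zpow_eq_zpow_val, halfu_val] at this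
  exact (zpow_eq_one_iff_right₀ (by norm_num) (by norm_num)).mp this

def trZ : MZ →* Aff := Aff.tr.comp (AddMonoidHom.toMultiplicative (Int.castAddHom ℚ))

@[simp] lemma trZ_apply (n : ℤ) : trZ (ofAdd n) = Aff.tr (ofAdd (n : ℚ)) := rfl

def ρ : H →* Aff :=
  lift trZ ⟨0, halfu⟩ (by
    rintro ⟨a, n, rfl⟩
    have h1 : ((ofAdd (2:ℤ)) ^ n : MZ) = ofAdd (2*n) := ofAdd_two_zpow n
    have h2 : ((φ0 ⟨(ofAdd (2:ℤ)) ^ n, ⟨n, rfl⟩⟩ : (⊤ : Subgroup MZ)) : MZ) = ofAdd n := by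
      have : (⟨(ofAdd (2:ℤ)) ^ n, ⟨n, rfl⟩⟩ : A0) = ⟨ofAdd (2*n), mem_A0 n⟩ := by
        ext; exact h1
      rw [this, φ0_apply]
    show (⟨0, halfu⟩ : Aff) * trZ ((ofAdd (2:ℤ)) ^ n : MZ) = trZ _ * ⟨0, halfu⟩
    rw [h1]
    conv_rhs => rw [h2]
    refine Aff.ext ?_ ?_ <;> simp <;> push_cast <;> ring)

@[simp] lemma ρ_x : ρ xH = ⟨1, 1⟩ := by
  rw [xH, ρ, lift_of, trZ_apply]
  rfl

@[simp] lemma ρ_y : ρ yH = ⟨0, halfu⟩ := by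
  rw [yH, ρ, lift_t]

lemma ρ_x_zpow (m : ℤ) : ρ (xH ^ m) = ⟨(m : ℚ), 1⟩ := by
  rw [xH_zpow, ρ, lift_of, trZ_apply]
  rfl

lemma ρ_y_zpow (m : ℤ) : ρ (yH ^ m) = ⟨0, halfu ^ m⟩ := by
  rw [map_zpow, ρ_y]
  have : (⟨0, halfu⟩ : Aff) = Aff.scIn halfu := rfl
  rw [this, ← map_zpow]
  rfl

/-- The elements `y^k x y^{-k}`, the "2^{-k} translations". -/
def aH (k : ℤ) : H := yH ^ k * xH * yH ^ (-k)

lemma ρ_aH (k : ℤ) : ρ (aH k) = ⟨(2⁻¹ : ℚ) ^ k, 1⟩ := by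
  rw [aH, map_mul, map_mul, ρ_x, ρ_y_zpow, ρ_y_zpow]
  refine Aff.ext ?_ ?_
  · simp [Units.val_zpow_eq_zpow_val]
  · simp

lemma ρ_aH_zpow (k m : ℤ) : ρ (aH k ^ m) = ⟨(m : ℚ) * (2⁻¹ : ℚ) ^ k, 1⟩ := by
  rw [map_zpow, ρ_aH]
  have : (⟨(2⁻¹ : ℚ) ^ k, 1⟩ : Aff) = Aff.tr (ofAdd ((2⁻¹:ℚ) ^ k)) := rfl
  rw [this, Aff.tr_zpow]
  rfl

lemma E1 : ∀ m : ℤ, xH ^ m = 1 → m = 0 := by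
  intro m h
  have := congrArg ρ h
  rw [ρ_x_zpow, map_one] at this
  have := congrArg Aff.a this
  simp at this
  exact_mod_cast this

lemma E6 {n : ℤ} (h : aH n = xH) : n = 0 := by
  have := congrArg ρ h
  rw [ρ_aH, ρ_x] at this
  have := congrArg Aff.a this
  simp at this
  exact halfu_zpow_eq_one (by ext; rw [Units.val_zpow_eq_zpow_val]; simpa using this)

end BGM

end


/-- The inner automorphisms of the Baumslag-Gersten group. -/
def innBG : Subgroup (MulAut BG) := (MulAut.conj : BG →* MulAut BG).range

instance : innBG.Normal := by
  constructor
  intro f hf g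
  obtain ⟨h, rfl⟩ := hf
  refine ⟨g h, ?_⟩
  ext z
  simp [innBG, MulAut.conj]

/-- The outer automorphism group of the Baumslag-Gersten group. -/
abbrev OutBG := MulAut BG ⧸ innBG

namespace BGM
open HNNExtension Multiplicative

noncomputable section

@[simp] lemma aH_zero : aH 0 = xH := by simp [aH]

lemma conj_aH (j k : ℤ) : yH ^ j * aH k * (yH ^ j)⁻¹ = aH (k + j) := by
  simp only [aH, ← zpow_neg]
  group

lemma conj_aH_zpow (j k m : ℤ) : yH ^ j * aH k ^ m * (yH ^ j)⁻¹ = aH (k + j) ^ m := by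
  rw [← conj_zpow, conj_aH]

lemma aH_sq (k : ℤ) : aH k = aH (k + 1) ^ (2:ℤ) := by
  have h1 : yH * xH ^ (2:ℤ) * yH⁻¹ = xH := by simpa using rel1H 1
  have h2 : aH (k + 1) ^ (2:ℤ) = yH ^ (k+1) * xH ^ (2:ℤ) * (yH ^ (k+1))⁻¹ := by
    rw [← conj_zpow]
    simp only [aH, ← zpow_neg]
  rw [h2]
  calc aH k = yH ^ k * xH * yH ^ (-k) := rfl
    _ = yH ^ k * (yH * xH ^ (2:ℤ) * yH⁻¹) * yH ^ (-k) := by rw [h1]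
    _ = yH ^ (k+1) * xH ^ (2:ℤ) * (yH ^ (k+1))⁻¹ := by group

lemma aH_pow (j : ℕ) (k : ℤ) : aH k = aH (k + j) ^ ((2:ℤ)^j) := by
  induction j generalizing k with
  | zero => simp
  | succ i ih =>
    rw [ih k, aH_sq (k + i), ← zpow_mul]
    congr 1
    · congr 1; push_cast; ring
    · push_cast; ring

lemma aH_le {k K : ℤ} (h : k ≤ K) : aH k = aH K ^ ((2:ℤ)^(K-k).toNat) := by
  have := aH_pow (K-k).toNat k
  rwa [show k + ((K-k).toNat : ℤ) = K by omega] at this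

lemma aH_comm (j k : ℤ) : Commute (aH j) (aH k) := by
  rcases le_total j k with h | h
  · rw [aH_le h]; exact (Commute.refl (aH k)).zpow_left _
  · rw [aH_le h]; exact (Commute.refl (aH j)).zpow_right _

lemma exists_rep (h : H) : ∃ k m n : ℤ, h = aH k ^ m * yH ^ n := by
  induction h using HNNExtension.induction_on with
  | of g =>
    refine ⟨0, g.toAdd, 0, ?_⟩
    simp [xH_zpow]
  | t => exact ⟨0, 0, 1, by simp [yH]⟩
  | mul a b ha hb =>
    obtain ⟨k, m, n, rfl⟩ := ha
    obtain ⟨k', m', n', rfl⟩ := hb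
    have hc : aH k' ^ m' = (yH ^ n)⁻¹ * aH (k' + n) ^ m' * yH ^ n := by
      rw [← conj_aH_zpow n k' m']
      group
    set K := max k (k' + n) with hK
    have e1 : aH k ^ m = aH K ^ (((2:ℤ)^(K-k).toNat) * m) := by
      rw [aH_le (le_max_left k (k'+n)), ← zpow_mul]
    have e2 : aH (k' + n) ^ m' = aH K ^ (((2:ℤ)^(K-(k'+n)).toNat) * m') := by
      rw [aH_le (le_max_right k (k'+n)), ← zpow_mul]
    refine ⟨K, ((2:ℤ)^(K-k).toNat) * m + ((2:ℤ)^(K-(k'+n)).toNat) * m', n + n', ?_⟩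
    rw [zpow_add, ← e1, ← e2, hc]
    rw [zpow_add yH n n']
    group
  | inv a ha =>
    obtain ⟨k, m, n, rfl⟩ := ha
    refine ⟨k - n, -m, -n, ?_⟩
    have hc : (yH ^ (-n))⁻¹⁻¹ * aH k ^ (-m) * (yH ^ (-n))⁻¹ = aH (k - n) ^ (-m) := by
      have := conj_aH_zpow (-n) k (-m)
      rw [inv_inv]
      simpa [sub_eq_add_neg] using this
    rw [inv_inv] at hc
    rw [← hc]
    group

lemma halfu_ne_one : halfu ≠ 1 := by
  intro h
  have := congrArg Units.val h
  rw [halfu_val] at this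
  norm_num at this

lemma E5 : ∀ m : ℤ, yH ^ m = 1 → m = 0 := by
  intro m h
  have h2 := congrArg (fun z => (ρ z).u) h
  simp only [ρ_y_zpow, map_one] at h2
  exact halfu_zpow_eq_one h2

lemma E2 (h : H) (k : ℤ) (hk : h⁻¹ * (xH * h) = yH ^ k) : False := by
  have hk' : xH * h = h * yH ^ k := by
    rw [← hk]; group
  have h2 := congrArg (fun z => (ρ z).u) hk'
  simp only [map_mul, ρ_x, ρ_y_zpow, Aff.mul_u', Aff.mk_u, one_mul] at h2
  have hk0 : k = 0 := halfu_zpow_eq_one (by rwa [eq_comm, mul_eq_left] at h2)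
  rw [hk0, zpow_zero, mul_one] at hk'
  have hx1 : xH = 1 := by
    have := mul_right_cancel (a := xH) (b := h) (c := 1) (by simpa using hk')
    exact this
  have := E1 1 (by simpa using hx1)
  omega

lemma E3 (h : H) (k : ℤ) (hk : h⁻¹ * (yH * h) = xH ^ k) : False := by
  have hk' : yH * h = h * xH ^ k := by
    rw [← hk]; group
  have h2 := congrArg (fun z => (ρ z).u) hk'
  simp only [map_mul, ρ_y, ρ_x_zpow, Aff.mul_u', Aff.mk_u, one_mul, mul_one] at h2
  exact halfu_ne_one (by rwa [mul_eq_right] at h2)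

lemma halfu_val_zpow (n : ℤ) : ((halfu ^ n : ℚˣ) : ℚ) = (2⁻¹:ℚ) ^ n := by
  rw [Units.val_zpow_eq_zpow_val, halfu_val]

lemma ρ_rep (k m n : ℤ) : ρ (aH k ^ m * yH ^ n) = ⟨(m : ℚ) * (2⁻¹:ℚ)^k, halfu ^ n⟩ := by
  rw [map_mul, ρ_aH_zpow, ρ_y_zpow]
  refine Aff.ext ?_ ?_ <;> simp

lemma E4 (h : H) (hx : h * xH = xH * h) (hy : h * yH = yH * h) : h = 1 := by
  obtain ⟨k, m, n, rfl⟩ := exists_rep h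
  have h2 := congrArg (fun z => (ρ z).a) hx
  simp only [map_mul, ρ_x, ρ_y_zpow, ρ_aH_zpow, Aff.mul_a', Aff.mul_u',
    Aff.mk_a, Aff.mk_u, halfu_val_zpow] at h2
  have hn : n = 0 := by
    apply halfu_zpow_eq_one
    ext
    rw [halfu_val_zpow]
    push_cast at h2 ⊢
    rw [halfu_val] at h2
    linarith
  subst hn
  rw [zpow_zero, mul_one] at hy ⊢
  have h3 := congrArg (fun z => (ρ z).a) hy
  simp only [map_mul, ρ_y, ρ_aH_zpow, Aff.mul_a', Aff.mul_u',
    Aff.mk_a, Aff.mk_u, halfu_val] at h3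
  have hq : (m : ℚ) * (2⁻¹:ℚ)^k = 0 := by
    push_cast at h3
    linarith
  have hm : m = 0 := by
    have h4 : ((2⁻¹:ℚ)^k) ≠ 0 := zpow_ne_zero _ (by norm_num)
    rcases mul_eq_zero.mp hq with h5 | h5
    · exact_mod_cast h5
    · exact absurd h5 h4
  rw [hm]
  simp

end
end BGM
/-! ### Generic reduced-word surgery lemma -/

namespace HNNExtension

open NormalWord

variable {G : Type*} [Group G] {A B : Subgroup G} {φ : A ≃* B}

theorem head_conj_mem (c : HNNExtension G A B φ) (z : G)
    (hz : c * of z = of z * c) (w : ReducedWord G A B) (hw : w.prod φ = c)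
    (hne : w.toList ≠ []) :
    ∀ u ∈ w.toList.head?.map Prod.fst,
      w.head⁻¹ * (z * w.head) ∈ toSubgroup A B (-u) := by
  rcases List.eq_nil_or_concat' w.toList with h | ⟨l', b, hsplit⟩
  · exact absurd h hne
  obtain ⟨u0, g0⟩ := b
  have hchain : (l' ++ [(u0, g0 * z)]).Chain'
      (fun a b => a.2 ∈ toSubgroup A B a.1 → a.1 = b.1) := by
    have := w.chain
    rw [hsplit] at this
    show List.IsChain _ _
    rw [List.isChain_append] at this ⊢
    refine ⟨this.1, List.isChain_singleton _, ?_⟩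
    intro x hx y hy
    have hy' : (u0, g0 * z) = y := by simpa using hy
    intro hmem
    have := this.2.2 x hx (u0, g0) (by simp)
    rw [← hy']
    exact this hmem
  set w₁ : ReducedWord G A B := ⟨w.head, l' ++ [(u0, g0 * z)], hchain⟩ with hw₁
  set w₂ : ReducedWord G A B := ⟨z * w.head, w.toList, w.chain⟩ with hw₂
  have hprod₁ : w₁.prod φ = c * of z := by
    rw [← hw]
    show of w.head * _ = _
    conv_rhs => rw [ReducedWord.prod, hsplit]
    rw [List.map_append, List.map_append, List.prod_append, List.prod_append]
    simp only [List.map_cons, List.map_nil, List.prod_cons, List.prod_nil]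
    rw [map_mul]
    simp [mul_assoc]
  have hprod₂ : w₂.prod φ = of z * c := by
    rw [← hw]
    show of (z * w.head) * _ = _
    rw [map_mul]
    simp [ReducedWord.prod, mul_assoc]
    rfl
  have heq : w₁.prod φ = w₂.prod φ := by rw [hprod₁, hprod₂, hz]
  have h3 := (HNNExtension.ReducedWord.map_fst_eq_and_of_prod_eq φ heq).2
  intro u hu
  have hufst : u ∈ w₁.toList.head?.map Prod.fst := by
    have : w₁.toList.head?.map Prod.fst = w.toList.head?.map Prod.fst := by
      show (l' ++ [(u0, g0 * z)]).head?.map Prod.fst = _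
      rw [hsplit]
      cases l' <;> simp
    rw [this]
    exact hu
  have := h3 u hufst
  simpa [hw₁, hw₂, mul_assoc] using this

end HNNExtension

/-! ### Level 2: the Baumslag–Gersten group as an HNN extension of BS(1,2) -/

namespace BGM
open HNNExtension HNNExtension.NormalWord Multiplicative

noncomputable section

lemma yH_inf_order : ∀ m : ℤ, yH ^ m = 1 → m = 0 := E5
lemma xH_inf_order : ∀ m : ℤ, xH ^ m = 1 → m = 0 := E1

abbrev A1 : Subgroup H := Subgroup.zpowers yH
abbrev B1 : Subgroup H := Subgroup.zpowers xH

def φ1 : A1 ≃* B1 :=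
  (zpowIso yH yH_inf_order).symm.trans (zpowIso xH xH_inf_order)

lemma mem_A1 (n : ℤ) : yH ^ n ∈ A1 := zpow_mem (Subgroup.mem_zpowers yH) n

lemma φ1_apply (n : ℤ) (h : yH ^ n ∈ A1) :
    ((φ1 ⟨yH ^ n, h⟩ : B1) : H) = xH ^ n := by
  have h2 : (⟨yH ^ n, h⟩ : A1) = ⟨yH ^ n, by exact ⟨n, rfl⟩⟩ := rfl
  rw [φ1, MulEquiv.trans_apply, zpowIso_symm_apply, zpowIso_apply]

abbrev GC := HNNExtension H A1 B1 φ1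

def Xg : GC := of xH
def Yg : GC := of yH
def Tg : GC := t

lemma relT (n : ℤ) : Tg * of (yH ^ n) = of (xH ^ n) * Tg := by
  have := t_mul_of (φ := φ1) ⟨yH ^ n, mem_A1 n⟩
  rwa [show ((⟨yH ^ n, mem_A1 n⟩ : A1) : H) = yH ^ n from rfl, φ1_apply n] at this

lemma T1 (c : GC) (hx : c * Xg = Xg * c) (hy : c * Yg = Yg * c) : c = 1 := by
  obtain ⟨d⟩ := NormalWord.TransversalPair.nonempty H A1 B1
  set w := (NormalWord.equiv φ1 d) c with hwdef
  have hw : w.prod φ1 = c := (NormalWord.equiv φ1 d).symm_apply_apply c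
  by_cases hne : w.toList = []
  · have hch : c = of w.head := by
      rw [← hw]
      show ReducedWord.prod φ1 w.toReducedWord = of w.head
      rw [ReducedWord.prod]
      have h0 : w.toReducedWord.toList = w.toList := rfl
      rw [h0, hne]
      simp
    rw [hch] at hx hy
    rw [Xg, ← map_mul, ← map_mul] at hx
    rw [Yg, ← map_mul, ← map_mul] at hy
    have h1 := HNNExtension.of_injective (φ := φ1) hx
    have h2 := HNNExtension.of_injective (φ := φ1) hy
    rw [hch, E4 w.head h1 h2, map_one]
  · exfalso
    have hredprod : (w.toReducedWord).prod φ1 = c := hw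
    have hu := HNNExtension.head_conj_mem c xH (by rwa [Xg] at hx) w.toReducedWord hredprod hne
    have hu' := HNNExtension.head_conj_mem c yH (by rwa [Yg] at hy) w.toReducedWord hredprod hne
    obtain ⟨p, hp⟩ : ∃ p, w.toList.head? = some p := by
      cases hl : w.toList with
      | nil => exact absurd hl hne
      | cons a l => exact ⟨a, rfl⟩
    have hp' : p.1 ∈ (w.toReducedWord.toList.head?.map Prod.fst) := by
      show p.1 ∈ (w.toList.head?.map Prod.fst)
      rw [hp]
      rfl
    have hmem := hu p.1 hp'
    have hmem' := hu' p.1 hp'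
    rcases Int.units_eq_one_or p.1 with h1 | h1 <;> rw [h1] at hmem hmem'
    · rw [show (-(1:ℤˣ)) = (-1 : ℤˣ) from rfl, toSubgroup_neg_one] at hmem'
      obtain ⟨k, hk⟩ := Subgroup.mem_zpowers_iff.mp hmem'
      exact E3 w.head k hk.symm
    · rw [show (-(-1:ℤˣ)) = (1 : ℤˣ) by simp, toSubgroup_one] at hmem
      obtain ⟨k, hk⟩ := Subgroup.mem_zpowers_iff.mp hmem
      exact E2 w.head k hk.symm

end
end BGM
/-! ### The Baumslag–Gersten group: relations and the isomorphism to the model -/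

namespace BGM
open HNNExtension HNNExtension.NormalWord Multiplicative

noncomputable section

lemma rel1BG : gy⁻¹ * gx * gy = gx * gx := by
  have hm : ((FreeGroup.of 1)⁻¹ * FreeGroup.of 0 * FreeGroup.of 1 *
      (FreeGroup.of 0 * FreeGroup.of 0)⁻¹ : FreeGroup (Fin 3)) ∈
      Subgroup.normalClosure bgRels :=
    Subgroup.subset_normalClosure (Set.mem_insert _ _)
  have h2 : PresentedGroup.mk bgRels ((FreeGroup.of 1)⁻¹ * FreeGroup.of 0 * FreeGroup.of 1 *
      (FreeGroup.of 0 * FreeGroup.of 0)⁻¹) = 1 := (QuotientGroup.eq_one_iff _).2 hm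
  simp only [map_mul, map_inv] at h2
  have h3 : (PresentedGroup.mk bgRels (FreeGroup.of 1))⁻¹ * PresentedGroup.mk bgRels (FreeGroup.of 0) *
      PresentedGroup.mk bgRels (FreeGroup.of 1) =
      PresentedGroup.mk bgRels (FreeGroup.of 0) * PresentedGroup.mk bgRels (FreeGroup.of 0) := by
    rw [← mul_inv_eq_one]
    exact h2
  exact h3

lemma rel2BG : gt⁻¹ * gx * gt = gy := by
  have hm : ((FreeGroup.of 2)⁻¹ * FreeGroup.of 0 * FreeGroup.of 2 *
      (FreeGroup.of 1)⁻¹ : FreeGroup (Fin 3)) ∈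
      Subgroup.normalClosure bgRels :=
    Subgroup.subset_normalClosure (Set.mem_insert_of_mem _ rfl)
  have h2 : PresentedGroup.mk bgRels ((FreeGroup.of 2)⁻¹ * FreeGroup.of 0 * FreeGroup.of 2 *
      (FreeGroup.of 1)⁻¹) = 1 := (QuotientGroup.eq_one_iff _).2 hm
  simp only [map_mul, map_inv] at h2
  have h3 : (PresentedGroup.mk bgRels (FreeGroup.of 2))⁻¹ * PresentedGroup.mk bgRels (FreeGroup.of 0) *
      PresentedGroup.mk bgRels (FreeGroup.of 2) = PresentedGroup.mk bgRels (FreeGroup.of 1) := by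
    rw [← mul_inv_eq_one]
    exact h2
  exact h3

/-! #### The forward homomorphism `BG →* GC` -/

def fwdf : Fin 3 → GC := ![Xg, Yg, Tg]

lemma fwd_rels : ∀ r ∈ bgRels, FreeGroup.lift fwdf r = 1 := by
  intro r hr
  have hXY : Yg⁻¹ * Xg * Yg = Xg * Xg := by
    have h1 : yH * (xH * xH) * yH⁻¹ = xH := by
      have := rel1H 1
      rw [show ((2:ℤ) * 1) = 2 by norm_num] at this
      rwa [zpow_two, zpow_one] at this
    have h2 : yH⁻¹ * xH * yH = xH * xH := by
      conv_lhs => rw [← h1]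
      group
    rw [Xg, Yg, ← map_inv, ← map_mul, ← map_mul, ← map_mul, h2]
  have hXT : Tg⁻¹ * Xg * Tg = Yg := by
    have := relT 1
    simp only [zpow_one] at this
    rw [Xg, Yg]
    rw [mul_assoc, ← this, inv_mul_cancel_left]
  rcases hr with h | h
  · rw [h]
    simp only [map_mul, map_inv, FreeGroup.lift_apply_of, fwdf]
    simp only [Matrix.cons_val_zero, Matrix.cons_val_one, Matrix.head_cons]
    rw [mul_inv_eq_one, hXY]
  · rw [Set.mem_singleton_iff] at h
    rw [h]
    simp only [map_mul, map_inv, FreeGroup.lift_apply_of, fwdf]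
    simp only [Matrix.cons_val_zero, Matrix.cons_val_one, Matrix.head_cons, Matrix.cons_val_two,
      Matrix.tail_cons]
    rw [mul_inv_eq_one, hXT]

def fwd : BG →* GC := PresentedGroup.toGroup fwd_rels

@[simp] lemma fwd_x : fwd gx = Xg := by
  rw [gx, fwd, PresentedGroup.toGroup.of]; simp [fwdf]
@[simp] lemma fwd_y : fwd gy = Yg := by
  rw [gy, fwd, PresentedGroup.toGroup.of]; simp [fwdf]
@[simp] lemma fwd_t : fwd gt = Tg := by
  rw [gt, fwd, PresentedGroup.toGroup.of]; simp [fwdf]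

/-! #### The backward homomorphism and injectivity of `fwd` -/

def β0 : H →* BG :=
  HNNExtension.lift (zpowersHom BG gx) gy (by
    rintro ⟨a, n, rfl⟩
    have h1 : ((ofAdd (2:ℤ)) ^ n : MZ) = ofAdd (2*n) := ofAdd_two_zpow n
    have h2 : ((φ0 ⟨(ofAdd (2:ℤ)) ^ n, ⟨n, rfl⟩⟩ : (⊤ : Subgroup MZ)) : MZ) = ofAdd n := by
      have : (⟨(ofAdd (2:ℤ)) ^ n, ⟨n, rfl⟩⟩ : A0) = ⟨ofAdd (2*n), mem_A0 n⟩ := by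
        ext; exact h1
      rw [this, φ0_apply]
    show gy * zpowersHom BG gx ((ofAdd (2:ℤ)) ^ n : MZ) = zpowersHom BG gx _ * gy
    rw [h1]
    conv_rhs => rw [h2]
    rw [zpowersHom_apply, zpowersHom_apply]
    show gy * gx ^ (2*n) = gx ^ n * gy
    have h3 : gx ^ (2*n) = gy⁻¹ * gx ^ n * gy := by
      have h4 : gx ^ (2:ℤ) = gy⁻¹ * gx * gy := by
        rw [rel1BG, zpow_two]
      calc gx ^ (2*n) = (gx ^ (2:ℤ)) ^ n := by rw [← zpow_mul]
        _ = (gy⁻¹ * gx * gy) ^ n := by rw [h4]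
        _ = gy⁻¹ * gx ^ n * gy := by
            have := conj_zpow (i := n) (a := gy⁻¹) (b := gx)
            simpa using this
    rw [h3]
    group)

@[simp] lemma β0_x : β0 xH = gx := by
  rw [xH, β0, lift_of, zpowersHom_apply]
  simp
@[simp] lemma β0_y : β0 yH = gy := by
  rw [yH, β0, lift_t]

def β : GC →* BG :=
  HNNExtension.lift β0 gt (by
    rintro ⟨a, n, rfl⟩
    show gt * β0 (yH ^ n) = β0 _ * gt
    have h2 : ((φ1 ⟨yH ^ n, ⟨n, rfl⟩⟩ : B1) : H) = xH ^ n := φ1_apply n _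
    conv_rhs => rw [h2]
    rw [map_zpow, map_zpow, β0_x, β0_y]
    have h3 : gy ^ n = gt⁻¹ * gx ^ n * gt := by
      have h4 : gy = gt⁻¹ * gx * gt := rel2BG.symm
      rw [h4]
      have := conj_zpow (i := n) (a := gt⁻¹) (b := gx)
      simpa using this
    rw [h3]
    group)

@[simp] lemma β_X : β Xg = gx := by rw [Xg, β, lift_of, β0_x]
@[simp] lemma β_Y : β Yg = gy := by rw [Yg, β, lift_of, β0_y]
@[simp] lemma β_T : β Tg = gt := by rw [Tg, β, lift_t]

lemma β_fwd (b : BG) : β (fwd b) = b := by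
  have h : β.comp fwd = MonoidHom.id BG := by
    apply PresentedGroup.ext
    intro i
    fin_cases i
    · show β (fwd gx) = gx; simp
    · show β (fwd gy) = gy; simp
    · show β (fwd gt) = gt; simp
  calc β (fwd b) = (β.comp fwd) b := rfl
    _ = b := by rw [h]; rfl

lemma fwd_inj : Function.Injective fwd := by
  intro a b h
  rw [← β_fwd a, ← β_fwd b, h]

end
end BGM
/-! ### Structure of the centralizer subgroup in BG -/

namespace BGM
open HNNExtension HNNExtension.NormalWord Multiplicative

noncomputable section

/-- The elements `y^k x y^{-k}` of BG. -/
def bB (k : ℤ) : BG := gy ^ k * gx * gy ^ (-k)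

lemma fwd_bB (k : ℤ) : fwd (bB k) = of (aH k) := by
  rw [bB, aH, map_mul, map_mul, map_zpow, map_zpow, fwd_x, fwd_y, Xg, Yg,
    map_mul, map_mul, map_zpow, map_zpow]

lemma bB_comm (j k : ℤ) : Commute (bB j) (bB k) := by
  have h : fwd (bB j * bB k) = fwd (bB k * bB j) := by
    rw [map_mul, map_mul, fwd_bB, fwd_bB, ← map_mul, ← map_mul, (aH_comm j k).eq]
  exact fwd_inj h

lemma bB_eq_gx {n : ℤ} (h : bB n = gx) : n = 0 := by
  have h2 : (of (aH n) : GC) = of xH := by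
    rw [← fwd_bB, h, fwd_x, Xg]
  exact E6 (HNNExtension.of_injective (φ := φ1) h2)

lemma exists_repBG (c : BG) (hc : c ∈ Subgroup.closure {gx, gy}) :
    ∃ k m n : ℤ, c = bB k ^ m * gy ^ n := by
  have hrange : ∃ h : H, fwd c = of h := by
    induction hc using Subgroup.closure_induction with
    | mem z hz =>
      rcases hz with h | h
      · exact ⟨xH, by rw [h, fwd_x, Xg]⟩
      · rw [Set.mem_singleton_iff] at h
        exact ⟨yH, by rw [h, fwd_y, Yg]⟩
    | one => exact ⟨1, by simp⟩
    | mul a b _ _ iha ihb =>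
      obtain ⟨h1, hh1⟩ := iha
      obtain ⟨h2, hh2⟩ := ihb
      exact ⟨h1 * h2, by rw [map_mul, hh1, hh2, map_mul]⟩
    | inv a _ iha =>
      obtain ⟨h1, hh1⟩ := iha
      exact ⟨h1⁻¹, by rw [map_inv, hh1, map_inv]⟩
  obtain ⟨h, hh⟩ := hrange
  obtain ⟨k, m, n, rfl⟩ := exists_rep h
  refine ⟨k, m, n, ?_⟩
  have hβ : β0 (aH k ^ m * yH ^ n) = bB k ^ m * gy ^ n := by
    rw [map_mul, map_zpow, map_zpow, β0_y]
    congr 2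
    rw [aH, map_mul, map_mul, map_zpow, map_zpow, β0_x, β0_y, bB]
  calc c = β (fwd c) := (β_fwd c).symm
    _ = β (of (aH k ^ m * yH ^ n)) := by rw [hh]
    _ = β0 (aH k ^ m * yH ^ n) := by rw [β, lift_of]
    _ = bB k ^ m * gy ^ n := hβ

/-- Elements of the centralizer of x inside ⟨x,y⟩ are powers of some `bB k`. -/
lemma rep_of_centralizer (c : BG) (hc : c ∈ Subgroup.closure {gx, gy})
    (hx : gx * c = c * gx) : ∃ k m : ℤ, c = bB k ^ m := by
  obtain ⟨k, m, n, rfl⟩ := exists_repBG c hc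
  have h1 : (bB k ^ m * gy ^ n) * gx * (bB k ^ m * gy ^ n)⁻¹ = gx := by
    rw [← hx]
    group
  have h2 : (bB k ^ m * gy ^ n) * gx * (bB k ^ m * gy ^ n)⁻¹
      = bB k ^ m * bB n * (bB k ^ m)⁻¹ := by
    show _ = bB k ^ m * (gy ^ n * gx * gy ^ (-n)) * (bB k ^ m)⁻¹
    group
  have h3 : bB k ^ m * bB n * (bB k ^ m)⁻¹ = gx := by
    rw [← h2, h1]
  have h4 : bB k ^ m * bB n = bB n * bB k ^ m := ((bB_comm k n).zpow_left m).eq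
  have h5 : bB n = gx := by
    rw [h4] at h3
    rwa [mul_inv_cancel_right] at h3
  have h6 : n = 0 := bB_eq_gx h5
  subst h6
  exact ⟨k, m, by rw [zpow_zero, mul_one]⟩

/-- The centralizer ∩ H is commutative. -/
lemma centralizer_comm (c c' : BG)
    (hc : c ∈ Subgroup.closure {gx, gy}) (hc' : c' ∈ Subgroup.closure {gx, gy})
    (hx : gx * c = c * gx) (hx' : gx * c' = c' * gx) : c * c' = c' * c := by
  obtain ⟨k, m, rfl⟩ := rep_of_centralizer c hc hx
  obtain ⟨j, l, rfl⟩ := rep_of_centralizer c' hc' hx'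
  exact ((bB_comm k j).zpow_zpow m l).eq

/-- The key injectivity input: C(x) ∩ C(y) is trivial in BG. -/
lemma L9 (c : BG) (hx : c * gx = gx * c) (hy : c * gy = gy * c) : c = 1 := by
  have h1 : fwd c * Xg = Xg * fwd c := by
    rw [← fwd_x, ← map_mul, ← map_mul, hx]
  have h2 : fwd c * Yg = Yg * fwd c := by
    rw [← fwd_y, ← map_mul, ← map_mul, hy]
  have h3 : fwd c = 1 := T1 (fwd c) h1 h2
  apply fwd_inj
  rw [h3, map_one]

end
end BGM
/-! ### The automorphisms and the main theorem -/

namespace BGM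

noncomputable section

abbrev Csub : Subgroup BG := Subgroup.centralizer {gx} ⊓ Subgroup.closure {gx, gy}

lemma Csub_comm (g : Csub) : gx * (g : BG) = (g : BG) * gx := by
  have h := (Subgroup.mem_inf.mp g.2).1
  exact Subgroup.mem_centralizer_iff.mp h gx rfl

lemma Csub_clos (g : Csub) : (g : BG) ∈ Subgroup.closure {gx, gy} :=
  (Subgroup.mem_inf.mp g.2).2

def Ef (g : BG) : Fin 3 → BG := ![gx, gy, g * gt]

lemma E_rels (g : BG) (hg : gx * g = g * gx) :
    ∀ r ∈ bgRels, FreeGroup.lift (Ef g) r = 1 := by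
  intro r hr
  rcases hr with h | h
  · rw [h]
    simp only [map_mul, map_inv, FreeGroup.lift_apply_of, Ef, Matrix.cons_val_zero, Matrix.cons_val_one,
      Matrix.head_cons]
    rw [mul_inv_eq_one, rel1BG]
  · rw [Set.mem_singleton_iff] at h
    rw [h]
    simp only [map_mul, map_inv, FreeGroup.lift_apply_of, Ef, Matrix.cons_val_zero, Matrix.cons_val_one,
      Matrix.head_cons, Matrix.cons_val_two, Matrix.tail_cons]
    rw [mul_inv_eq_one, ← rel2BG, mul_inv_rev]
    have hcon : g⁻¹ * gx * g = gx := by rw [mul_assoc, hg]; group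
    calc gt⁻¹ * g⁻¹ * gx * (g * gt) = gt⁻¹ * (g⁻¹ * gx * g) * gt := by group
      _ = gt⁻¹ * gx * gt := by rw [hcon]

def EndoE (g : BG) (hg : gx * g = g * gx) : BG →* BG := PresentedGroup.toGroup (E_rels g hg)

@[simp] lemma E_x (g : BG) (hg : gx * g = g * gx) : EndoE g hg gx = gx :=
  (PresentedGroup.toGroup.of (E_rels g hg) (x := 0)).trans (by simp [Ef])
@[simp] lemma E_y (g : BG) (hg : gx * g = g * gx) : EndoE g hg gy = gy :=
  (PresentedGroup.toGroup.of (E_rels g hg) (x := 1)).trans (by simp [Ef])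
@[simp] lemma E_t (g : BG) (hg : gx * g = g * gx) : EndoE g hg gt = g * gt :=
  (PresentedGroup.toGroup.of (E_rels g hg) (x := 2)).trans (by simp [Ef])

lemma E_fix (g : BG) (hg : gx * g = g * gx) (u : BG)
    (hu : u ∈ Subgroup.closure {gx, gy}) : EndoE g hg u = u := by
  induction hu using Subgroup.closure_induction with
  | mem z hz =>
    rcases hz with h | h
    · rw [h]; exact E_x g hg
    · rw [Set.mem_singleton_iff] at h; rw [h]; exact E_y g hg
  | one => simp
  | mul a b _ _ iha ihb => rw [map_mul, iha, ihb]
  | inv a _ iha => rw [map_inv, iha]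

lemma E_congr {a b : BG} (h : a = b) (ha : gx * a = a * gx) (hb : gx * b = b * gx) (z : BG) :
    EndoE a ha z = EndoE b hb z := by subst h; rfl

lemma E_comp_apply (g h : BG) (hg : gx * g = g * gx) (hh : gx * h = h * gx)
    (hgh : gx * (h * g) = (h * g) * gx) (hhc : h ∈ Subgroup.closure {gx, gy}) (z : BG) :
    EndoE g hg (EndoE h hh z) = EndoE (h * g) hgh z := by
  have hcomp : (EndoE g hg).comp (EndoE h hh) = EndoE (h * g) hgh := by
    apply PresentedGroup.ext
    intro i
    fin_cases i
    · show EndoE g hg (EndoE h hh gx) = EndoE (h * g) hgh gx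
      simp
    · show EndoE g hg (EndoE h hh gy) = EndoE (h * g) hgh gy
      simp
    · show EndoE g hg (EndoE h hh gt) = EndoE (h * g) hgh gt
      rw [E_t, E_t, map_mul, E_t, E_fix g hg h hhc, mul_assoc]
  exact DFunLike.congr_fun hcomp z

lemma E_one (h1 : gx * 1 = 1 * gx) (z : BG) : EndoE 1 h1 z = z := by
  have : EndoE 1 h1 = MonoidHom.id BG := by
    apply PresentedGroup.ext
    intro i
    fin_cases i
    · show EndoE 1 h1 gx = gx; simp
    · show EndoE 1 h1 gy = gy; simp
    · show EndoE 1 h1 gt = gt; simp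
  rw [this]; rfl

lemma Csub_mul_coe (g h : Csub) : ((g * h : Csub) : BG) = (g : BG) * (h : BG) := rfl

def AutE (g : Csub) : MulAut BG where
  toFun := EndoE (g : BG) (Csub_comm g)
  invFun := EndoE ((g⁻¹ : Csub) : BG) (Csub_comm g⁻¹)
  left_inv z := by
    rw [E_comp_apply _ _ (Csub_comm g⁻¹) (Csub_comm g) (by
      rw [← Csub_mul_coe]; exact Csub_comm (g * g⁻¹)) (Csub_clos g) z]
    rw [E_congr (show (g : BG) * ((g⁻¹ : Csub) : BG) = 1 by
      rw [← Csub_mul_coe, mul_inv_cancel]; rfl) _ (by group), E_one]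
  right_inv z := by
    rw [E_comp_apply _ _ (Csub_comm g) (Csub_comm g⁻¹) (by
      rw [← Csub_mul_coe]; exact Csub_comm (g⁻¹ * g)) (Csub_clos g⁻¹) z]
    rw [E_congr (show ((g⁻¹ : Csub) : BG) * (g : BG) = 1 by
      rw [← Csub_mul_coe, inv_mul_cancel]; rfl) _ (by group), E_one]
  map_mul' := map_mul _

lemma AutE_apply_eq (g : Csub) (z : BG) : AutE g z = EndoE (g : BG) (Csub_comm g) z := rfl

def ΦAut : Csub →* MulAut BG where
  toFun := AutE
  map_one' := by
    apply MulEquiv.toMonoidHom_injective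
    apply PresentedGroup.ext
    intro i
    fin_cases i
    · show AutE 1 gx = (1 : MulAut BG) gx
      rw [AutE_apply_eq]
      simp
    · show AutE 1 gy = (1 : MulAut BG) gy
      rw [AutE_apply_eq]
      simp
    · show AutE 1 gt = (1 : MulAut BG) gt
      rw [AutE_apply_eq]
      have : ((1 : Csub) : BG) = 1 := rfl
      rw [E_congr this _ (by group), E_t]
      simp
  map_mul' g h := by
    apply MulEquiv.toMonoidHom_injective
    apply PresentedGroup.ext
    intro i
    have key : ∀ z : BG, AutE (g * h) z = AutE g (AutE h z) := by
      intro z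
      rw [AutE_apply_eq, AutE_apply_eq, AutE_apply_eq]
      rw [E_comp_apply _ _ (Csub_comm g) (Csub_comm h)
        (by rw [← Csub_mul_coe]; exact Csub_comm (h * g)) (Csub_clos h) z]
      exact E_congr (by
        rw [Csub_mul_coe]
        exact centralizer_comm _ _ (Csub_clos g) (Csub_clos h)
          (Csub_comm g) (Csub_comm h)) _ _ z
    fin_cases i
    · show AutE (g * h) gx = (AutE g * AutE h) gx
      rw [MulAut.mul_apply, key]
    · show AutE (g * h) gy = (AutE g * AutE h) gy
      rw [MulAut.mul_apply, key]
    · show AutE (g * h) gt = (AutE g * AutE h) gt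
      rw [MulAut.mul_apply, key]

lemma ΦAut_apply (g : Csub) : ΦAut g = AutE g := rfl

end
end BGM

/-- The map from the centralizer of x in the Baumslag-Solitar subgroup
H = ⟨x, y⟩ of the Baumslag-Gersten group G to Out(G), sending g to the class of
the automorphism x ↦ x, y ↦ y, t ↦ gt, is an injective group homomorphism. -/
theorem bg_centralizer_into_out :
    ∃ φ : (Subgroup.centralizer {gx} ⊓ Subgroup.closure {gx, gy} : Subgroup BG) →* OutBG,
      Function.Injective φ ∧
      ∀ (g : (Subgroup.centralizer {gx} ⊓ Subgroup.closure {gx, gy} : Subgroup BG))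
        (F : MulAut BG), F gx = gx → F gy = gy → F gt = (g : BG) * gt →
          φ g = QuotientGroup.mk F := by
  classical
  refine ⟨(QuotientGroup.mk' innBG).comp BGM.ΦAut, ?_, ?_⟩
  · rw [injective_iff_map_eq_one]
    intro a ha
    have h1 : BGM.ΦAut a ∈ innBG := by
      rwa [MonoidHom.comp_apply, QuotientGroup.mk'_apply, QuotientGroup.eq_one_iff] at ha
    obtain ⟨c, hc⟩ := h1
    have hgx : c * gx = gx * c := by
      have h := congrArg (fun F : MulAut BG => F gx) hc
      simp only [MulAut.conj_apply] at h
      rw [BGM.ΦAut_apply, BGM.AutE_apply_eq, BGM.E_x] at h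
      rwa [mul_inv_eq_iff_eq_mul] at h
    have hgy : c * gy = gy * c := by
      have h := congrArg (fun F : MulAut BG => F gy) hc
      simp only [MulAut.conj_apply] at h
      rw [BGM.ΦAut_apply, BGM.AutE_apply_eq, BGM.E_y] at h
      rwa [mul_inv_eq_iff_eq_mul] at h
    have hc1 : c = 1 := BGM.L9 c hgx hgy
    have hgt := congrArg (fun F : MulAut BG => F gt) hc
    simp only [MulAut.conj_apply] at hgt
    rw [BGM.ΦAut_apply, BGM.AutE_apply_eq, BGM.E_t, hc1, one_mul, inv_one, mul_one] at hgt
    have : (a : BG) = 1 := by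
      have h2 := mul_right_cancel (b := gt) (a := (1:BG)) (c := (a : BG)) (by rw [one_mul, ← hgt])
      exact h2.symm
    exact Subtype.ext this
  · intro g F h1 h2 h3
    have hFeq : BGM.AutE g = F := by
      apply MulEquiv.toMonoidHom_injective
      apply PresentedGroup.ext
      intro i
      fin_cases i
      · show BGM.AutE g gx = F gx
        rw [h1, BGM.AutE_apply_eq, BGM.E_x]
      · show BGM.AutE g gy = F gy
        rw [h2, BGM.AutE_apply_eq, BGM.E_y]
      · show BGM.AutE g gt = F gt
        rw [h3, BGM.AutE_apply_eq, BGM.E_t]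
    show QuotientGroup.mk' innBG (BGM.ΦAut g) = _
    have : BGM.ΦAut g = BGM.AutE g := rfl
    rw [this, hFeq]
    rfl
end
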